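/- arXiv:1603.00113 — 7 statements merged into one kernel-verified Lean document; each statement's English description precedes it below -/
import Mathlib

section
/- Theorem 1: Let u = (u_0,…,u_c) have all components strictly positive, and let ν ∈ ℕ₀^c satisfy ν_1 + ⋯ + ν_c = n. Then the energy function V(·,u) is strictly convex on the convex set 𝒮(ν), the gradient equation ∇_x V(x,u) = 0 has exactly one solution x_ss in 𝒮(ν), and at this solution the Hessian matrix of V(·,u) is positive definite (so x_ss is a stable equilibrium of the gradient flow ẋ = −∇_x V(x,u)). -/
open Finset Filter Topology

/-- The normalized energy function `V(x,u)` of `n` charged particles at positions `x` with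
`c+1` electrodes at positions `q` carrying charges `u`. -/
noncomputable def energy (n c : ℕ) (q u : Fin (c + 1) → ℝ) (x : Fin n → ℝ) : ℝ :=
  (1 / 2) * ∑ i : Fin n, ∑ j ∈ Finset.univ \ {i}, 1 / |x i - x j| +
    ∑ i : Fin n, ∑ j : Fin (c + 1), u j / |x i - q j|

/-- The simplified state space `𝒮₀ = {x : q₀ < x₁ < ⋯ < xₙ < q_c}`. -/
def stateSpace (n c : ℕ) (q : Fin (c + 1) → ℝ) : Set (Fin n → ℝ) :=
  {x | (∀ i j : Fin n, i < j → x i < x j) ∧ ∀ i, q 0 < x i ∧ x i < q (Fin.last c)}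

/-- The region of attraction `𝒮(ν)`: the subset of `𝒮₀` where, for each `k`, the consecutive
coordinates with indices in `[ν₁+⋯+ν_{k-1}, ν₁+⋯+ν_k)` lie strictly between `q_{k-1}` and `q_k`. -/
def roa (n c : ℕ) (q : Fin (c + 1) → ℝ) (ν : Fin c → ℕ) : Set (Fin n → ℝ) :=
  {x | x ∈ stateSpace n c q ∧ ∀ k : Fin c, ∀ m : Fin n,
    (∑ j ∈ Finset.Iio k, ν j) ≤ (m : ℕ) → (m : ℕ) < (∑ j ∈ Finset.Iio k, ν j) + ν k →
    q k.castSucc < x m ∧ x m < q k.succ}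

/-- The set of points whose coordinates are pairwise distinct and distinct from all
electrode positions. -/
def goodSet (n c : ℕ) (q : Fin (c + 1) → ℝ) : Set (Fin n → ℝ) :=
  {x | (∀ i j : Fin n, i ≠ j → x i ≠ x j) ∧ ∀ (i : Fin n) (j : Fin (c + 1)), x i ≠ q j}

/-- The Hessian matrix of `V(·,u)` at `x`. -/
noncomputable def hessian (n c : ℕ) (q u : Fin (c + 1) → ℝ) (x : Fin n → ℝ) :
    Matrix (Fin n) (Fin n) ℝ :=
  fun k i => iteratedFDeriv ℝ 2 (energy n c q u) x ![Pi.single k 1, Pi.single i 1]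

namespace Stmt0Aux
variable {n c : ℕ}

def sgn (i j : Fin n) : ℝ := if j < i then 1 else -1

def eps (K : Fin n → Fin c) (i : Fin n) (j : Fin (c + 1)) : ℝ :=
  if (j : ℕ) ≤ (K i : ℕ) then 1 else -1

def P (n : ℕ) (i : Fin n) : (Fin n → ℝ) →L[ℝ] ℝ := ContinuousLinearMap.proj i

def IsBlock (ν : Fin c → ℕ) (k : Fin c) (m : Fin n) : Prop :=
  (∑ j ∈ Finset.Iio k, ν j) ≤ (m : ℕ) ∧ (m : ℕ) < (∑ j ∈ Finset.Iio k, ν j) + ν k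

lemma sgn_cases (i j : Fin n) : sgn i j = 1 ∨ sgn i j = -1 := by
  unfold sgn; split_ifs <;> simp

lemma eps_cases (K : Fin n → Fin c) (i : Fin n) (j : Fin (c + 1)) :
    eps K i j = 1 ∨ eps K i j = -1 := by
  unfold eps; split_ifs <;> simp

lemma abs_term {s d : ℝ} (hs : s = 1 ∨ s = -1) (h : 0 < s * d) (a : ℝ) :
    a / |d| = a * s / d := by
  rcases hs with rfl | rfl
  · rw [abs_of_pos (by linarith)]; ring_nf
  · rw [abs_of_neg (by linarith), mul_neg_one, div_neg, neg_div]

variable {q u : Fin (c + 1) → ℝ} {ν : Fin c → ℕ} {K : Fin n → Fin c} {x : Fin n → ℝ}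

lemma roa_sgn (hx : x ∈ roa n c q ν) {i j : Fin n} (hij : i ≠ j) :
    0 < sgn i j * (x i - x j) := by
  unfold sgn; split_ifs with h
  · have := hx.1.1 j i h; nlinarith
  · have : i < j := lt_of_le_of_ne (not_lt.1 h) hij
    have := hx.1.1 i j this; nlinarith

lemma roa_block (hq : StrictMono q) (hK : ∀ m, IsBlock ν (K m) m) (hx : x ∈ roa n c q ν)
    (i : Fin n) : q (K i).castSucc < x i ∧ x i < q (K i).succ :=
  hx.2 (K i) i (hK i).1 (hK i).2

lemma roa_eps (hq : StrictMono q) (hK : ∀ m, IsBlock ν (K m) m) (hx : x ∈ roa n c q ν)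
    (i : Fin n) (j : Fin (c + 1)) : 0 < eps K i j * (x i - q j) := by
  have hb := roa_block hq hK hx i
  unfold eps; split_ifs with h
  · have h1 : q j ≤ q (K i).castSucc := hq.monotone (by simpa [Fin.le_def] using h)
    nlinarith [hb.1]
  · have h1 : q (K i).succ ≤ q j := hq.monotone (by simp [Fin.le_def]; omega)
    nlinarith [hb.2]

lemma roa_good (hq : StrictMono q) (hK : ∀ m, IsBlock ν (K m) m) (hx : x ∈ roa n c q ν) :
    (∀ i j : Fin n, i ≠ j → x i ≠ x j) ∧ ∀ (i : Fin n) (j : Fin (c + 1)), x i ≠ q j := by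
  constructor
  · intro i j hij heq
    have := roa_sgn hx hij
    rw [heq] at this; simp at this
  · intro i j heq
    have := roa_eps hq hK hx i j
    rw [heq] at this; simp at this

noncomputable def Etil (q u : Fin (c + 1) → ℝ) (K : Fin n → Fin c) (x : Fin n → ℝ) : ℝ :=
  (∑ i : Fin n, ∑ j ∈ Finset.univ \ {i}, ((1/2) * sgn i j) / (x i - x j)) +
    ∑ i : Fin n, ∑ j : Fin (c + 1), (eps K i j * u j) / (x i - q j)

noncomputable def Dtil (q u : Fin (c + 1) → ℝ) (K : Fin n → Fin c) (x : Fin n → ℝ) :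
    (Fin n → ℝ) →L[ℝ] ℝ :=
  (∑ i : Fin n, ∑ j ∈ Finset.univ \ {i},
      (-(((1/2) * sgn i j) / (x i - x j) ^ 2)) • (P n i - P n j)) +
    ∑ i : Fin n, ∑ j : Fin (c + 1), (-((eps K i j * u j) / (x i - q j) ^ 2)) • P n i

noncomputable def D2til (q u : Fin (c + 1) → ℝ) (K : Fin n → Fin c) (x : Fin n → ℝ) :
    (Fin n → ℝ) →L[ℝ] (Fin n → ℝ) →L[ℝ] ℝ :=
  (∑ i : Fin n, ∑ j ∈ Finset.univ \ {i},
      ((2 * ((1/2) * sgn i j) / (x i - x j) ^ 3) • (P n i - P n j)).smulRight (P n i - P n j)) +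
    ∑ i : Fin n, ∑ j : Fin (c + 1),
      ((2 * (eps K i j * u j) / (x i - q j) ^ 3) • P n i).smulRight (P n i)

lemma genD1 {a b : ℝ} {L : (Fin n → ℝ) →L[ℝ] ℝ} {x : Fin n → ℝ} (h : L x - b ≠ 0) :
    HasFDerivAt (fun y => a / (L y - b)) ((-(a / (L x - b) ^ 2)) • L) x := by
  have h1 : HasDerivAt (fun t : ℝ => a / (t - b)) (-(a / (L x - b) ^ 2)) (L x) := by
    have := (((hasDerivAt_id (L x)).sub_const b).inv (by simpa using h)).const_mul a
    convert this using 1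
    all_goals first
      | (funext t; rw [div_eq_mul_inv]; rfl)
      | rfl
      | (simp only [id]; ring)
  exact h1.comp_hasFDerivAt x L.hasFDerivAt

lemma genD2 {a b : ℝ} {L : (Fin n → ℝ) →L[ℝ] ℝ} {x : Fin n → ℝ} (h : L x - b ≠ 0) :
    HasFDerivAt (fun y => (-(a / (L y - b) ^ 2)) • L)
      (((2 * a / (L x - b) ^ 3) • L).smulRight L) x := by
  have h1 : HasDerivAt (fun t : ℝ => -(a / (t - b) ^ 2)) (2 * a / (L x - b) ^ 3) (L x) := by
    have h2 : ((L x - b) ^ 2) ≠ 0 := pow_ne_zero _ h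
    have := ((((hasDerivAt_id (L x)).sub_const b).pow 2).inv h2).const_mul (-a)
    convert this using 1
    all_goals first
      | (funext t; simp only [id, Pi.pow_apply, Pi.inv_apply]; ring)
      | (funext t; field_simp)
      | rfl
      | (simp only [id, Pi.pow_apply]; field_simp; ring)
  have hφ : HasFDerivAt (fun y => -(a / (L y - b) ^ 2)) ((2 * a / (L x - b) ^ 3) • L) x :=
    h1.comp_hasFDerivAt x L.hasFDerivAt
  have H := hφ.smul (hasFDerivAt_const L x)
  simp only [smul_zero, zero_add] at H
  exact H

lemma PiP_apply (i : Fin n) (y : Fin n → ℝ) : (P n i) y = y i := rfl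

lemma Psub_apply (i j : Fin n) (y : Fin n → ℝ) : (P n i - P n j) y = y i - y j := rfl

lemma hasFDerivAt_Etil (hgood : (∀ i j : Fin n, i ≠ j → x i ≠ x j) ∧
    ∀ (i : Fin n) (j : Fin (c + 1)), x i ≠ q j) :
    HasFDerivAt (Etil q u K) (Dtil q u K x) x := by
  unfold Etil Dtil
  apply HasFDerivAt.add
  · apply HasFDerivAt.fun_sum
    intro i _
    apply HasFDerivAt.fun_sum
    intro j hj
    have hne : i ≠ j := by
      simp only [Finset.mem_sdiff, Finset.mem_univ, Finset.mem_singleton] at hj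
      exact fun h => hj.2 h.symm
    have hL : (P n i - P n j) x - 0 ≠ 0 := by
      rw [Psub_apply, sub_zero]
      exact sub_ne_zero.2 (hgood.1 i j hne)
    have := genD1 (a := (1/2) * sgn i j) hL
    simpa only [Psub_apply, sub_zero] using this
  · apply HasFDerivAt.fun_sum
    intro i _
    apply HasFDerivAt.fun_sum
    intro j _
    have hL : (P n i) x - q j ≠ 0 := sub_ne_zero.2 (hgood.2 i j)
    have := genD1 (a := eps K i j * u j) hL
    simpa only [PiP_apply] using this

lemma hasFDerivAt_Dtil (hgood : (∀ i j : Fin n, i ≠ j → x i ≠ x j) ∧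
    ∀ (i : Fin n) (j : Fin (c + 1)), x i ≠ q j) :
    HasFDerivAt (Dtil q u K) (D2til q u K x) x := by
  unfold Dtil D2til
  apply HasFDerivAt.add
  · apply HasFDerivAt.fun_sum
    intro i _
    apply HasFDerivAt.fun_sum
    intro j hj
    have hne : i ≠ j := by
      simp only [Finset.mem_sdiff, Finset.mem_univ, Finset.mem_singleton] at hj
      exact fun h => hj.2 h.symm
    have hL : (P n i - P n j) x - 0 ≠ 0 := by
      rw [Psub_apply, sub_zero]
      exact sub_ne_zero.2 (hgood.1 i j hne)
    have := genD2 (a := (1/2) * sgn i j) hL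
    simpa only [Psub_apply, sub_zero] using this
  · apply HasFDerivAt.fun_sum
    intro i _
    apply HasFDerivAt.fun_sum
    intro j _
    have hL : (P n i) x - q j ≠ 0 := sub_ne_zero.2 (hgood.2 i j)
    have := genD2 (a := eps K i j * u j) hL
    simpa only [PiP_apply] using this

lemma Etil_eq (hq : StrictMono q) (hK : ∀ m, IsBlock ν (K m) m) (hx : x ∈ roa n c q ν) :
    energy n c q u x = Etil q u K x := by
  unfold energy Etil
  congr 1
  · rw [Finset.mul_sum]
    refine Finset.sum_congr rfl fun i _ => ?_
    rw [Finset.mul_sum]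
    refine Finset.sum_congr rfl fun j hj => ?_
    have hne : i ≠ j := by
      simp only [Finset.mem_sdiff, Finset.mem_univ, Finset.mem_singleton] at hj
      exact fun h => hj.2 h.symm
    rw [mul_one_div, abs_term (sgn_cases i j) (roa_sgn hx hne)]
  · refine Finset.sum_congr rfl fun i _ => ?_
    refine Finset.sum_congr rfl fun j _ => ?_
    rw [abs_term (eps_cases K i j) (roa_eps hq hK hx i j), mul_comm]

lemma D2til_apply (xx v w : Fin n → ℝ) :
    D2til q u K xx v w =
      (∑ i : Fin n, ∑ j ∈ Finset.univ \ {i},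
        sgn i j * (v i - v j) * (w i - w j) / (xx i - xx j) ^ 3) +
      ∑ i : Fin n, ∑ j : Fin (c + 1),
        2 * (eps K i j * u j) * v i * w i / (xx i - q j) ^ 3 := by
  unfold D2til
  simp only [ContinuousLinearMap.add_apply, ContinuousLinearMap.coe_sum', Finset.sum_apply,
    ContinuousLinearMap.smulRight_apply, ContinuousLinearMap.coe_smul', Pi.smul_apply,
    Psub_apply, PiP_apply, smul_eq_mul]
  congr 1 <;>
    (refine Finset.sum_congr rfl fun i _ => Finset.sum_congr rfl fun j _ => ?_; ring)

lemma aux_nonneg {s d : ℝ} (h : 0 < s * d) (A : ℝ) : 0 ≤ s * A * A / d ^ 3 := by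
  have hd : d ≠ 0 := by rintro rfl; simp at h
  have : s * A * A / d ^ 3 = A ^ 2 * (s * d) / d ^ 4 := by field_simp
  rw [this]
  exact div_nonneg (mul_nonneg (sq_nonneg A) h.le) (by positivity)

lemma aux_pos {s d e A : ℝ} (h : 0 < s * d) (he : 0 < e) (hA : A ≠ 0) :
    0 < 2 * (s * e) * A * A / d ^ 3 := by
  have hd : d ≠ 0 := by rintro rfl; simp at h
  have : 2 * (s * e) * A * A / d ^ 3 = 2 * e * A ^ 2 * (s * d) / d ^ 4 := by field_simp
  rw [this]
  apply div_pos (by positivity) (by positivity)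

lemma D2til_pos (hq : StrictMono q) (hu : ∀ j, 0 < u j) (hK : ∀ m, IsBlock ν (K m) m)
    (hx : x ∈ roa n c q ν) {v : Fin n → ℝ} (hv : v ≠ 0) :
    0 < D2til q u K x v v := by
  rw [D2til_apply]
  have h1 : 0 ≤ ∑ i : Fin n, ∑ j ∈ Finset.univ \ {i},
      sgn i j * (v i - v j) * (v i - v j) / (x i - x j) ^ 3 := by
    refine Finset.sum_nonneg fun i _ => Finset.sum_nonneg fun j hj => ?_
    have hne : i ≠ j := by
      simp only [Finset.mem_sdiff, Finset.mem_univ, Finset.mem_singleton] at hj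
      exact fun h => hj.2 h.symm
    exact aux_nonneg (roa_sgn hx hne) _
  have h2 : 0 < ∑ i : Fin n, ∑ j : Fin (c + 1),
      2 * (eps K i j * u j) * v i * v i / (x i - q j) ^ 3 := by
    obtain ⟨i0, hi0⟩ : ∃ i, v i ≠ 0 := by
      by_contra h; push_neg at h; exact hv (funext h)
    refine Finset.sum_pos' (fun i _ => Finset.sum_nonneg fun j _ => ?_) ⟨i0, Finset.mem_univ i0, ?_⟩
    · rcases eq_or_ne (v i) 0 with h | h
      · simp [h]
      · exact (aux_pos (roa_eps hq hK hx i j) (hu j) h).le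
    · refine Finset.sum_pos (fun j _ => aux_pos (roa_eps hq hK hx i0 j) (hu j) hi0) ⟨0, mem_univ 0⟩
  linarith

lemma D2til_symm (xx v w : Fin n → ℝ) : D2til q u K xx v w = D2til q u K xx w v := by
  rw [D2til_apply, D2til_apply]
  congr 1 <;>
    (refine Finset.sum_congr rfl fun i _ => Finset.sum_congr rfl fun j _ => ?_; ring)

lemma sum_Iic_eq {ν : Fin c → ℕ} (k : Fin c) :
    ∑ j ∈ Finset.Iic k, ν j = (∑ j ∈ Finset.Iio k, ν j) + ν k := by
  rw [← Finset.Iio_insert, Finset.sum_insert (by simp), add_comm]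

lemma block_le {ν : Fin c → ℕ} {k k' : Fin c} (h : k < k') :
    (∑ j ∈ Finset.Iio k, ν j) + ν k ≤ ∑ j ∈ Finset.Iio k', ν j := by
  rw [← sum_Iic_eq]
  exact Finset.sum_le_sum_of_subset (fun j hj => by
    simp only [Finset.mem_Iic] at hj
    simp only [Finset.mem_Iio]
    exact lt_of_le_of_lt hj h)

lemma block_unique {ν : Fin c → ℕ} {k k' : Fin c} {m : Fin n}
    (h : IsBlock ν k m) (h' : IsBlock ν k' m) : k = k' := by
  by_contra hne
  rcases lt_or_gt_of_ne hne with hlt | hlt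
  · have h2 := block_le (ν := ν) hlt
    obtain ⟨ha, hb⟩ := h; obtain ⟨hc, hd⟩ := h'
    omega
  · have h2 := block_le (ν := ν) hlt
    obtain ⟨ha, hb⟩ := h; obtain ⟨hc, hd⟩ := h'
    omega

lemma exists_block {ν : Fin c → ℕ} (hν : ∑ k, ν k = n) (m : Fin n) :
    ∃ k : Fin c, IsBlock ν k m := by
  classical
  have hc : 0 < c := by
    by_contra h
    have hc0 : c = 0 := by omega
    subst hc0
    have h1 : (m : ℕ) < n := m.2
    have h2 : n = 0 := by simpa using hν.symm
    omega
  set T : Finset (Fin c) := Finset.univ.filter (fun k => (m : ℕ) < ∑ j ∈ Finset.Iic k, ν j)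
    with hT
  have hTne : T.Nonempty := by
    refine ⟨⟨c - 1, by omega⟩, ?_⟩
    rw [hT, Finset.mem_filter]
    refine ⟨Finset.mem_univ _, ?_⟩
    have hiic : Finset.Iic (⟨c - 1, by omega⟩ : Fin c) = Finset.univ := by
      ext j
      simp only [Finset.mem_Iic, Finset.mem_univ, iff_true, Fin.le_def]
      have := j.2
      omega
    rw [hiic, hν]
    exact m.2
  set k1 := T.min' hTne with hk1
  have hk1mem : k1 ∈ T := T.min'_mem hTne
  rw [hT, Finset.mem_filter] at hk1mem
  have hub : (m : ℕ) < (∑ j ∈ Finset.Iio k1, ν j) + ν k1 := by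
    rw [← sum_Iic_eq]; exact hk1mem.2
  refine ⟨k1, ?_, hub⟩
  by_contra hlb
  push_neg at hlb
  have hk1pos : 0 < (k1 : ℕ) := by
    rcases Nat.eq_zero_or_pos (k1 : ℕ) with h0 | h0
    · exfalso
      have : Finset.Iio k1 = ∅ := by
        ext j
        simp only [Finset.mem_Iio, Finset.notMem_empty, iff_false, Fin.lt_def, h0]
        omega
      rw [this] at hlb
      simp at hlb
    · exact h0
  set k0 : Fin c := ⟨(k1 : ℕ) - 1, by omega⟩ with hk0
  have hiic : Finset.Iic k0 = Finset.Iio k1 := by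
    ext j
    simp only [Finset.mem_Iic, Finset.mem_Iio, Fin.le_def, Fin.lt_def, hk0]
    omega
  have hk0T : k0 ∈ T := by
    rw [hT, Finset.mem_filter]
    exact ⟨Finset.mem_univ _, by rw [hiic]; exact hlb⟩
  have := T.min'_le k0 hk0T
  rw [← hk1] at this
  have : (k1 : ℕ) ≤ (k0 : ℕ) := this
  simp [hk0] at this
  omega

lemma block_mono {ν : Fin c → ℕ} {k k' : Fin c} {m m' : Fin n}
    (h : IsBlock ν k m) (h' : IsBlock ν k' m') (hmm : (m : ℕ) ≤ (m' : ℕ)) : k ≤ k' := by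
  by_contra hle
  push_neg at hle
  have h2 := block_le (ν := ν) hle
  obtain ⟨ha, hb⟩ := h; obtain ⟨hc', hd⟩ := h'
  omega

lemma roa_nonempty (hq : StrictMono q) {ν : Fin c → ℕ} (K : Fin n → Fin c)
    (hK : ∀ m, IsBlock ν (K m) m) : (roa n c q ν).Nonempty := by
  classical
  set val : Fin c → ℕ → ℝ := fun k r =>
    q k.castSucc + ((r + 1 : ℕ) : ℝ) * (q k.succ - q k.castSucc) / ((ν k : ℝ) + 1) with hval
  have hgap : ∀ k : Fin c, (0 : ℝ) < q k.succ - q k.castSucc :=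
    fun k => sub_pos.2 (hq (Fin.castSucc_lt_succ (i := k)))
  have hbnd : ∀ (k : Fin c) (r : ℕ), r < ν k → q k.castSucc < val k r ∧ val k r < q k.succ := by
    intro k r hr
    have hpos : (0 : ℝ) < ((r + 1 : ℕ) : ℝ) * (q k.succ - q k.castSucc) / ((ν k : ℝ) + 1) := by
      have := hgap k; positivity
    constructor
    · rw [hval]; dsimp only; linarith
    · rw [hval]; dsimp only
      have h1 : ((r + 1 : ℕ) : ℝ) * (q k.succ - q k.castSucc) / ((ν k : ℝ) + 1)
          < q k.succ - q k.castSucc := by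
        rw [div_lt_iff₀ (by positivity)]
        have h2 : ((r + 1 : ℕ) : ℝ) < (ν k : ℝ) + 1 := by exact_mod_cast Nat.succ_lt_succ hr
        nlinarith [hgap k]
      linarith
  have hvmono : ∀ (k : Fin c) (r r' : ℕ), r < r' → val k r < val k r' := by
    intro k r r' hr
    rw [hval]; dsimp only
    have h2 : ((r + 1 : ℕ) : ℝ) < ((r' + 1 : ℕ) : ℝ) := by exact_mod_cast Nat.succ_lt_succ hr
    have := hgap k
    gcongr
  set x0 : Fin n → ℝ := fun m => val (K m) ((m : ℕ) - ∑ j ∈ Finset.Iio (K m), ν j) with hx0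
  have hrlt : ∀ m : Fin n, (m : ℕ) - (∑ j ∈ Finset.Iio (K m), ν j) < ν (K m) := by
    intro m
    have h1 := (hK m).1; have h2 := (hK m).2
    omega
  have hbm : ∀ m : Fin n, q (K m).castSucc < x0 m ∧ x0 m < q (K m).succ :=
    fun m => hbnd (K m) _ (hrlt m)
  have hmono : ∀ m m' : Fin n, m < m' → x0 m < x0 m' := by
    intro m m' hlt
    have hkle : K m ≤ K m' := block_mono (hK m) (hK m') (le_of_lt hlt)
    rcases eq_or_lt_of_le hkle with he | hne
    · have hrr : (m : ℕ) - (∑ j ∈ Finset.Iio (K m), ν j)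
          < (m' : ℕ) - (∑ j ∈ Finset.Iio (K m'), ν j) := by
        rw [← he]
        have h1 := (hK m).1
        have h1' := (hK m').1
        rw [← he] at h1'
        have : (m : ℕ) < (m' : ℕ) := hlt
        omega
      calc x0 m = val (K m) _ := rfl
        _ < val (K m) ((m' : ℕ) - ∑ j ∈ Finset.Iio (K m'), ν j) := by
            rw [he]; rw [he] at hrr; exact hvmono _ _ _ hrr
        _ = x0 m' := by rw [hx0]; dsimp only; rw [he]
    · have h1 : x0 m < q (K m).succ := (hbm m).2
      have h2 : q (K m).succ ≤ q (K m').castSucc := by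
        apply hq.monotone
        simp only [Fin.le_def, Fin.val_succ, Fin.coe_castSucc]
        exact hne
      have h3 : q (K m').castSucc < x0 m' := (hbm m').1
      linarith
  refine ⟨x0, ⟨⟨fun i j hij => hmono i j hij, fun i => ⟨?_, ?_⟩⟩, ?_⟩⟩
  · exact lt_of_le_of_lt (hq.monotone (Fin.zero_le _)) (hbm i).1
  · exact lt_of_lt_of_le (hbm i).2 (hq.monotone (Fin.le_last _))
  · intro k m h1 h2
    have : K m = k := block_unique (hK m) ⟨h1, h2⟩
    rw [← this]
    exact hbm m

lemma mem_roa_iff (hq : StrictMono q) {ν : Fin c → ℕ}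
    (hb : ∀ m : Fin n, ∃ k : Fin c, IsBlock ν k m) (x : Fin n → ℝ) :
    x ∈ roa n c q ν ↔ (∀ i j : Fin n, i < j → x i < x j) ∧
      (∀ (k : Fin c) (m : Fin n), IsBlock ν k m → q k.castSucc < x m ∧ x m < q k.succ) := by
  constructor
  · intro hx
    exact ⟨hx.1.1, fun k m hkm => hx.2 k m hkm.1 hkm.2⟩
  · rintro ⟨h1, h2⟩
    refine ⟨⟨h1, fun i => ?_⟩, fun k m hk1 hk2 => h2 k m ⟨hk1, hk2⟩⟩
    obtain ⟨k, hk⟩ := hb i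
    have h3 := h2 k i hk
    exact ⟨lt_of_le_of_lt (hq.monotone (Fin.zero_le _)) h3.1,
      lt_of_lt_of_le h3.2 (hq.monotone (Fin.le_last _))⟩

lemma roa_decomp {ν : Fin c → ℕ} : roa n c q ν =
    ((⋂ i : Fin n, ⋂ j : Fin n, {x : Fin n → ℝ | i < j → x i < x j}) ∩
      ⋂ i : Fin n, ({x : Fin n → ℝ | q 0 < x i} ∩ {x : Fin n → ℝ | x i < q (Fin.last c)})) ∩
    ⋂ k : Fin c, ⋂ m : Fin n, {x : Fin n → ℝ |
      (∑ j ∈ Finset.Iio k, ν j) ≤ (m : ℕ) → (m : ℕ) < (∑ j ∈ Finset.Iio k, ν j) + ν k →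
      (q k.castSucc < x m ∧ x m < q k.succ)} := by
  ext x
  simp only [roa, stateSpace, Set.mem_setOf_eq, Set.mem_inter_iff, Set.mem_iInter]

lemma isOpen_roa {ν : Fin c → ℕ} : IsOpen (roa n c q ν) := by
  rw [roa_decomp]
  apply IsOpen.inter
  · apply IsOpen.inter
    · refine isOpen_iInter_of_finite fun i => isOpen_iInter_of_finite fun j => ?_
      by_cases h : i < j
      · simp only [h, true_implies]
        exact isOpen_lt (continuous_apply i) (continuous_apply j)
      · simp only [h, false_implies]
        exact isOpen_univ
    · refine isOpen_iInter_of_finite fun i => IsOpen.inter ?_ ?_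
      · exact isOpen_lt continuous_const (continuous_apply i)
      · exact isOpen_lt (continuous_apply i) continuous_const
  · refine isOpen_iInter_of_finite fun k => isOpen_iInter_of_finite fun m => ?_
    by_cases h1 : (∑ j ∈ Finset.Iio k, ν j) ≤ (m : ℕ)
    · by_cases h2 : (m : ℕ) < (∑ j ∈ Finset.Iio k, ν j) + ν k
      · simp only [h1, h2, true_implies]
        exact IsOpen.inter (isOpen_lt continuous_const (continuous_apply m))
          (isOpen_lt (continuous_apply m) continuous_const)
      · simp only [h2, false_implies, implies_true]
        exact isOpen_univ
    · simp only [h1, false_implies]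
      exact isOpen_univ

lemma isLinearMap_sub_proj (i j : Fin n) :
    IsLinearMap ℝ (fun w : Fin n → ℝ => w i - w j) :=
  ⟨fun a b => by simp [Pi.add_apply]; ring, fun r a => by simp [Pi.smul_apply, smul_eq_mul]; ring⟩

lemma isLinearMap_proj (i : Fin n) : IsLinearMap ℝ (fun w : Fin n → ℝ => w i) :=
  ⟨fun a b => rfl, fun r a => rfl⟩

lemma convex_roa {ν : Fin c → ℕ} : Convex ℝ (roa n c q ν) := by
  rw [roa_decomp]
  apply Convex.inter
  · apply Convex.inter
    · refine convex_iInter fun i => convex_iInter fun j => ?_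
      by_cases h : i < j
      · simp only [h, true_implies]
        have h2 : {x : Fin n → ℝ | x i < x j} = {w : Fin n → ℝ | w i - w j < 0} := by
          ext w; simp [sub_neg]
        rw [h2]
        exact convex_halfSpace_lt (isLinearMap_sub_proj i j) 0
      · simp only [h, false_implies]
        exact convex_univ
    · refine convex_iInter fun i => Convex.inter ?_ ?_
      · exact convex_halfSpace_gt (isLinearMap_proj i) (q 0)
      · exact convex_halfSpace_lt (isLinearMap_proj i) (q (Fin.last c))
  · refine convex_iInter fun k => convex_iInter fun m => ?_
    by_cases h1 : (∑ j ∈ Finset.Iio k, ν j) ≤ (m : ℕ)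
    · by_cases h2 : (m : ℕ) < (∑ j ∈ Finset.Iio k, ν j) + ν k
      · simp only [h1, h2, true_implies]
        exact Convex.inter (convex_halfSpace_gt (isLinearMap_proj m) (q k.castSucc))
          (convex_halfSpace_lt (isLinearMap_proj m) (q k.succ))
      · simp only [h2, false_implies, implies_true]
        exact convex_univ
    · simp only [h1, false_implies]
      exact convex_univ

lemma isClosed_weak {ν : Fin c → ℕ} : IsClosed {x : Fin n → ℝ |
    (∀ i j : Fin n, i < j → x i ≤ x j) ∧
    ∀ (k : Fin c) (m : Fin n), IsBlock ν k m → q k.castSucc ≤ x m ∧ x m ≤ q k.succ} := by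
  have hdec : {x : Fin n → ℝ | (∀ i j : Fin n, i < j → x i ≤ x j) ∧
      ∀ (k : Fin c) (m : Fin n), IsBlock ν k m → q k.castSucc ≤ x m ∧ x m ≤ q k.succ} =
      (⋂ i : Fin n, ⋂ j : Fin n, {x : Fin n → ℝ | i < j → x i ≤ x j}) ∩
      ⋂ k : Fin c, ⋂ m : Fin n, {x : Fin n → ℝ |
        IsBlock ν k m → (q k.castSucc ≤ x m ∧ x m ≤ q k.succ)} := by
    ext x
    simp only [Set.mem_setOf_eq, Set.mem_inter_iff, Set.mem_iInter]
  rw [hdec]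
  apply IsClosed.inter
  · refine isClosed_iInter fun i => isClosed_iInter fun j => ?_
    by_cases h : i < j
    · simp only [h, true_implies]
      exact isClosed_le (continuous_apply i) (continuous_apply j)
    · simp only [h, false_implies]
      exact isClosed_univ
  · refine isClosed_iInter fun k => isClosed_iInter fun m => ?_
    by_cases h : IsBlock (n := n) ν k m
    · simp only [h, true_implies]
      exact IsClosed.inter (isClosed_le continuous_const (continuous_apply m))
        (isClosed_le (continuous_apply m) continuous_const)
    · simp only [h, false_implies]
      exact isClosed_univ

lemma roa_subset_weak {ν : Fin c → ℕ} : roa n c q ν ⊆ {x : Fin n → ℝ |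
    (∀ i j : Fin n, i < j → x i ≤ x j) ∧
    ∀ (k : Fin c) (m : Fin n), IsBlock ν k m → q k.castSucc ≤ x m ∧ x m ≤ q k.succ} := by
  intro x hx
  exact ⟨fun i j hij => (hx.1.1 i j hij).le,
    fun k m hkm => ⟨(hx.2 k m hkm.1 hkm.2).1.le, (hx.2 k m hkm.1 hkm.2).2.le⟩⟩

variable {q u : Fin (c + 1) → ℝ} {ν : Fin c → ℕ} {K : Fin n → Fin c}

lemma energy_eventuallyEq (hq : StrictMono q) (hK : ∀ m, IsBlock ν (K m) m)
    {x : Fin n → ℝ} (hx : x ∈ roa n c q ν) :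
    energy n c q u =ᶠ[𝓝 x] Etil q u K :=
  Filter.eventually_of_mem (isOpen_roa.mem_nhds hx) fun y hy => Etil_eq hq hK hy

lemma hasFDerivAt_energy (hq : StrictMono q) (hK : ∀ m, IsBlock ν (K m) m)
    {x : Fin n → ℝ} (hx : x ∈ roa n c q ν) :
    HasFDerivAt (energy n c q u) (Dtil q u K x) x :=
  (hasFDerivAt_Etil (roa_good hq hK hx)).congr_of_eventuallyEq (energy_eventuallyEq hq hK hx)

lemma fderiv_energy_eq (hq : StrictMono q) (hK : ∀ m, IsBlock ν (K m) m)
    {x : Fin n → ℝ} (hx : x ∈ roa n c q ν) :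
    fderiv ℝ (energy n c q u) x = Dtil q u K x :=
  (hasFDerivAt_energy hq hK hx).fderiv

lemma fderiv_fderiv_energy (hq : StrictMono q) (hK : ∀ m, IsBlock ν (K m) m)
    {x : Fin n → ℝ} (hx : x ∈ roa n c q ν) :
    fderiv ℝ (fderiv ℝ (energy n c q u)) x = D2til q u K x := by
  have h1 : fderiv ℝ (energy n c q u) =ᶠ[𝓝 x] Dtil q u K :=
    Filter.eventually_of_mem (isOpen_roa.mem_nhds hx) fun y hy => fderiv_energy_eq hq hK hy
  exact ((hasFDerivAt_Dtil (roa_good hq hK hx)).congr_of_eventuallyEq h1).fderiv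

/-- derivative of the energy along a segment -/
lemma hasDerivAt_line (hq : StrictMono q) (hK : ∀ m, IsBlock ν (K m) m)
    {x v : Fin n → ℝ} {t : ℝ} (ht : x + t • v ∈ roa n c q ν) :
    HasDerivAt (fun s : ℝ => energy n c q u (x + s • v)) (Dtil q u K (x + t • v) v) t := by
  have hγ : HasDerivAt (fun s : ℝ => x + s • v) v t := by
    simpa using ((hasDerivAt_id t).smul_const v).const_add x
  exact (hasFDerivAt_energy hq hK ht).comp_hasDerivAt t hγ

lemma hasDerivAt_line' (hq : StrictMono q) (hK : ∀ m, IsBlock ν (K m) m)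
    {x v : Fin n → ℝ} {t : ℝ} (ht : x + t • v ∈ roa n c q ν) :
    HasDerivAt (fun s : ℝ => Dtil q u K (x + s • v) v) (D2til q u K (x + t • v) v v) t := by
  have hγ : HasDerivAt (fun s : ℝ => x + s • v) v t := by
    simpa using ((hasDerivAt_id t).smul_const v).const_add x
  have h3 : HasDerivAt (fun s : ℝ => Dtil q u K (x + s • v)) (D2til q u K (x + t • v) v) t :=
    HasFDerivAt.comp_hasDerivAt (l := Dtil q u K) t (hasFDerivAt_Dtil (u := u) (roa_good hq hK ht)) hγ
  have h4 := h3.clm_apply (hasDerivAt_const t v)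
  simpa using h4

lemma seg_mem (hxΩ : x ∈ roa n c q ν) {y : Fin n → ℝ} (hyΩ : y ∈ roa n c q ν)
    {t : ℝ} (ht : t ∈ Set.Icc (0:ℝ) 1) : x + t • (y - x) ∈ roa n c q ν := by
  have h := convex_roa (q := q) (ν := ν) hxΩ hyΩ (a := 1 - t) (b := t)
    (by linarith [ht.1, ht.2]) ht.1 (by ring)
  have he : (1 - t) • x + t • y = x + t • (y - x) := by
    rw [smul_sub, sub_smul, one_smul]; abel
  rwa [he] at h

lemma strictConvexOn_seg (hq : StrictMono q) (hu : ∀ j, 0 < u j)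
    (hK : ∀ m, IsBlock ν (K m) m) {x y : Fin n → ℝ}
    (hx : x ∈ roa n c q ν) (hy : y ∈ roa n c q ν) (hxy : x ≠ y) :
    StrictConvexOn ℝ (Set.Icc (0:ℝ) 1) (fun t => energy n c q u (x + t • (y - x))) := by
  set v : Fin n → ℝ := y - x with hv
  have hvne : v ≠ 0 := sub_ne_zero.2 (Ne.symm hxy)
  set g : ℝ → ℝ := fun t => energy n c q u (x + t • v) with hg
  set U : Set ℝ := {t : ℝ | x + t • v ∈ roa n c q ν} with hU
  have hUopen : IsOpen U := by
    have hc : Continuous fun t : ℝ => x + t • v :=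
      continuous_const.add (continuous_id.smul continuous_const)
    exact isOpen_roa.preimage hc
  have hmem : ∀ t ∈ Set.Icc (0:ℝ) 1, t ∈ U := fun t ht => seg_mem hx hy ht
  apply strictConvexOn_of_deriv2_pos (convex_Icc 0 1)
  · intro t ht
    exact ((hasDerivAt_line hq hK (hmem t ht)).continuousAt).continuousWithinAt
  · intro t ht
    rw [interior_Icc] at ht
    have htU : t ∈ U := hmem t ⟨ht.1.le, ht.2.le⟩
    have h2 : deriv (deriv g) t = D2til q u K (x + t • v) v v := by
      have hEv : deriv g =ᶠ[𝓝 t] fun s => Dtil q u K (x + s • v) v :=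
        Filter.eventually_of_mem (hUopen.mem_nhds htU) fun s hs =>
          (hasDerivAt_line hq hK hs).deriv
      rw [hEv.deriv_eq]
      exact (hasDerivAt_line' hq hK htU).deriv
    have h3 : deriv^[2] g t = deriv (deriv g) t := rfl
    rw [h3, h2]
    exact D2til_pos hq hu hK htU hvne

lemma strictConvexOn_energy (hq : StrictMono q) (hu : ∀ j, 0 < u j)
    (hK : ∀ m, IsBlock ν (K m) m) :
    StrictConvexOn ℝ (roa n c q ν) (energy n c q u) := by
  refine ⟨convex_roa, fun x hx y hy hxy a b ha hb hab => ?_⟩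
  have hseg := strictConvexOn_seg hq hu hK hx hy hxy
  have h01 : (0:ℝ) ∈ Set.Icc (0:ℝ) 1 := by norm_num
  have h11 : (1:ℝ) ∈ Set.Icc (0:ℝ) 1 := by norm_num
  have h := hseg.2 h01 h11 (by norm_num) ha hb hab
  simp only [smul_eq_mul, mul_zero, mul_one, zero_add] at h
  have e0 : x + (0:ℝ) • (y - x) = x := by simp
  have e1 : x + (1:ℝ) • (y - x) = y := by simp
  have eb : x + b • (y - x) = a • x + b • y := by
    have ha' : a = 1 - b := by linarith
    subst ha'
    rw [smul_sub, sub_smul, one_smul]; abel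
  rw [e0, e1, eb] at h
  convert h using 2
  all_goals rfl

lemma strict_min (hq : StrictMono q) (hu : ∀ j, 0 < u j)
    (hK : ∀ m, IsBlock ν (K m) m) {z y : Fin n → ℝ}
    (hz : z ∈ roa n c q ν) (hcrit : fderiv ℝ (energy n c q u) z = 0)
    (hy : y ∈ roa n c q ν) (hne : y ≠ z) :
    energy n c q u z < energy n c q u y := by
  set v : Fin n → ℝ := y - z with hv
  have hvne : v ≠ 0 := sub_ne_zero.2 hne
  set g : ℝ → ℝ := fun t => energy n c q u (z + t • v) with hg
  set g' : ℝ → ℝ := fun t => Dtil q u K (z + t • v) v with hg'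
  have hmem : ∀ t ∈ Set.Icc (0:ℝ) 1, z + t • v ∈ roa n c q ν := fun t ht => seg_mem hz hy ht
  have hgd : ∀ t ∈ Set.Icc (0:ℝ) 1, HasDerivAt g (g' t) t :=
    fun t ht => hasDerivAt_line hq hK (hmem t ht)
  -- g' is strictly monotone on [0,1]
  have hg'mono : StrictMonoOn g' (Set.Icc (0:ℝ) 1) := by
    apply strictMonoOn_of_deriv_pos (convex_Icc 0 1)
    · intro t ht
      exact ((hasDerivAt_line' hq hK (hmem t ht)).continuousAt).continuousWithinAt
    · intro t ht
      rw [interior_Icc] at ht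
      have htm := hmem t ⟨ht.1.le, ht.2.le⟩
      rw [(hasDerivAt_line' hq hK htm).deriv]
      exact D2til_pos hq hu hK htm hvne
  have hg'0 : g' 0 = 0 := by
    have hz0 : z + (0:ℝ) • v = z := by simp
    rw [hg']
    dsimp only
    rw [hz0, ← fderiv_energy_eq hq hK hz, hcrit]
    rfl
  -- mean value theorem
  obtain ⟨ξ, hξ, hslope⟩ := exists_hasDerivAt_eq_slope g g' zero_lt_one
    (fun t ht => ((hasDerivAt_line hq hK (hmem t ht)).continuousAt).continuousWithinAt)
    (fun t ht => hgd t ⟨ht.1.le, ht.2.le⟩)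
  have hpos : 0 < g' ξ := by
    rw [← hg'0]
    exact hg'mono (Set.mem_Icc.2 ⟨le_refl 0, zero_le_one⟩)
      (Set.mem_Icc.2 ⟨hξ.1.le, hξ.2.le⟩) hξ.1
  have h1 : g 1 - g 0 = g' ξ := by
    rw [hslope]; ring
  have e0 : g 0 = energy n c q u z := by rw [hg]; simp
  have e1 : g 1 = energy n c q u y := by
    rw [hg]
    simp only [one_smul, hv]
    congr 1
    abel
  rw [e0, e1] at h1
  linarith

lemma energy_part_nonneg (hu : ∀ j, 0 < u j) (y : Fin n → ℝ) :
    0 ≤ (1 / 2) * ∑ i : Fin n, ∑ j ∈ Finset.univ \ {i}, 1 / |y i - y j| ∧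
    0 ≤ ∑ i : Fin n, ∑ j : Fin (c + 1), u j / |y i - q j| := by
  constructor
  · apply mul_nonneg (by norm_num)
    exact Finset.sum_nonneg fun i _ => Finset.sum_nonneg fun j _ =>
      div_nonneg zero_le_one (abs_nonneg _)
  · exact Finset.sum_nonneg fun i _ => Finset.sum_nonneg fun j _ =>
      div_nonneg (hu j).le (abs_nonneg _)

lemma energy_nonneg (hu : ∀ j, 0 < u j) (y : Fin n → ℝ) : 0 ≤ energy n c q u y := by
  have h := energy_part_nonneg (q := q) (u := u) hu y
  unfold energy
  linarith [h.1, h.2]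

lemma energy_ge_pair (hu : ∀ j, 0 < u j) (y : Fin n → ℝ) {i j : Fin n} (hij : i ≠ j) :
    (1 / 2) * (1 / |y i - y j|) ≤ energy n c q u y := by
  have h := energy_part_nonneg (q := q) (u := u) hu y
  have h1 : (1 : ℝ) / |y i - y j| ≤ ∑ j' ∈ Finset.univ \ {i}, 1 / |y i - y j'| := by
    apply Finset.single_le_sum (f := fun j' => (1:ℝ) / |y i - y j'|)
      (fun j' _ => div_nonneg zero_le_one (abs_nonneg _))
    simp [Ne.symm hij]
  have h2 : ∑ j' ∈ Finset.univ \ {i}, 1 / |y i - y j'| ≤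
      ∑ i' : Fin n, ∑ j' ∈ Finset.univ \ {i'}, 1 / |y i' - y j'| := by
    apply Finset.single_le_sum (f := fun i' => ∑ j' ∈ Finset.univ \ {i'}, 1 / |y i' - y j'|)
      (fun i' _ => Finset.sum_nonneg fun j' _ => div_nonneg zero_le_one (abs_nonneg _))
      (Finset.mem_univ i)
  unfold energy
  nlinarith [h.2]

lemma energy_ge_elec (hu : ∀ j, 0 < u j) (y : Fin n → ℝ) (i : Fin n) (j : Fin (c + 1)) :
    u j / |y i - q j| ≤ energy n c q u y := by
  have h := energy_part_nonneg (q := q) (u := u) hu y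
  have h1 : u j / |y i - q j| ≤ ∑ j' : Fin (c + 1), u j' / |y i - q j'| :=
    Finset.single_le_sum (f := fun j' => u j' / |y i - q j'|)
      (fun j' _ => div_nonneg (hu j').le (abs_nonneg _)) (Finset.mem_univ j)
  have h2 : ∑ j' : Fin (c + 1), u j' / |y i - q j'| ≤
      ∑ i' : Fin n, ∑ j' : Fin (c + 1), u j' / |y i' - q j'| :=
    Finset.single_le_sum (f := fun i' => ∑ j' : Fin (c + 1), u j' / |y i' - q j'|)
      (fun i' _ => Finset.sum_nonneg fun j' _ => div_nonneg (hu j').le (abs_nonneg _))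
      (Finset.mem_univ i)
  unfold energy
  linarith [h.1]

lemma exists_min (hq : StrictMono q) (hu : ∀ j, 0 < u j)
    (hK : ∀ m, IsBlock ν (K m) m) (hb : ∀ m : Fin n, ∃ k : Fin c, IsBlock ν k m) :
    ∃ z ∈ roa n c q ν, fderiv ℝ (energy n c q u) z = 0 := by
  obtain ⟨x0, hx0⟩ := roa_nonempty hq K hK
  set B := energy n c q u x0 with hB
  have hB0 : 0 ≤ B := energy_nonneg hu x0
  set S : Set (Fin n → ℝ) := {x | x ∈ roa n c q ν ∧ energy n c q u x ≤ B} with hS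
  have hWsub : S ⊆ {x : Fin n → ℝ | (∀ i j : Fin n, i < j → x i ≤ x j) ∧
      ∀ (k : Fin c) (m : Fin n), IsBlock ν k m → q k.castSucc ≤ x m ∧ x m ≤ q k.succ} :=
    fun x hx => roa_subset_weak hx.1
  have hSclosed : IsClosed S := by
    apply isClosed_of_closure_subset
    intro z hzcl
    have hzW := (isClosed_weak (q := q) (ν := ν)).closure_subset_iff.2 hWsub hzcl
    have hzroa : z ∈ roa n c q ν := by
      by_contra hznot
      rw [mem_roa_iff hq hb] at hznot
      rcases not_and_or.mp hznot with hA | hA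
      · push_neg at hA
        obtain ⟨i, j, hij, hle⟩ := hA
        have heq : z i = z j := le_antisymm (hzW.1 i j hij) hle
        set δ : ℝ := 1 / (4 * (B + 1)) with hδdef
        have hδ : 0 < δ := by positivity
        obtain ⟨y, hyS, hdist⟩ := Metric.mem_closure_iff.1 hzcl δ hδ
        have hd1 : |y i - z i| < δ :=
          lt_of_le_of_lt (by rw [← Real.dist_eq, dist_comm]; exact dist_le_pi_dist z y i) hdist
        have hd2 : |y j - z j| < δ :=
          lt_of_le_of_lt (by rw [← Real.dist_eq, dist_comm]; exact dist_le_pi_dist z y j) hdist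
        have hij' : i ≠ j := ne_of_lt hij
        have hyij : y i ≠ y j := (roa_good hq hK hyS.1).1 i j hij'
        have habs : 0 < |y i - y j| := abs_pos.2 (sub_ne_zero.2 hyij)
        have hsplit : y i - y j = (y i - z i) - (y j - z j) := by rw [heq]; ring
        have hup : |y i - y j| < 2 * δ := by
          rw [hsplit]
          calc |(y i - z i) - (y j - z j)| ≤ |y i - z i| + |y j - z j| := abs_sub _ _
            _ < 2 * δ := by linarith
        have hlow := energy_ge_pair (q := q) hu y hij'
        have h2 : 1 / (2 * δ) < 1 / |y i - y j| := by
          apply one_div_lt_one_div_of_lt habs hup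
        have h3 : energy n c q u y ≤ B := hyS.2
        have h4 : 1 / (2 * δ) = 2 * (B + 1) := by
          rw [hδdef]; field_simp; ring
        nlinarith
      · push_neg at hA
        obtain ⟨k, m, hkm, hnot⟩ := hA
        have hweak := hzW.2 k m hkm
        have key : ∀ j0 : Fin (c + 1), z m = q j0 → False := by
          intro j0 heq
          set δ : ℝ := u j0 / (B + 1) with hδdef
          have hδ : 0 < δ := by have := hu j0; positivity
          obtain ⟨y, hyS, hdist⟩ := Metric.mem_closure_iff.1 hzcl δ hδ
          have hd1 : |y m - q j0| < δ := by
            rw [← heq]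
            exact lt_of_le_of_lt (by rw [← Real.dist_eq, dist_comm]; exact dist_le_pi_dist z y m)
              hdist
          have habs : 0 < |y m - q j0| :=
            abs_pos.2 (sub_ne_zero.2 ((roa_good hq hK hyS.1).2 m j0))
          have hlow := energy_ge_elec (q := q) hu y m j0
          have h2 : u j0 / δ < u j0 / |y m - q j0| :=
            div_lt_div_of_pos_left (hu j0) habs hd1
          have h3 : energy n c q u y ≤ B := hyS.2
          have h4 : u j0 / δ = B + 1 := by
            rw [hδdef, div_div_eq_mul_div, mul_comm, mul_div_assoc, div_self (hu j0).ne',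
              mul_one]

          linarith
        by_cases hlt : q k.castSucc < z m
        · exact key k.succ (le_antisymm hweak.2 (hnot hlt))
        · push_neg at hlt
          exact key k.castSucc (le_antisymm hlt hweak.1)
    refine ⟨hzroa, ?_⟩
    by_contra hgt
    push_neg at hgt
    have hcont : ContinuousAt (energy n c q u) z :=
      (hasFDerivAt_energy hq hK hzroa).differentiableAt.continuousAt
    have hev : (energy n c q u) ⁻¹' Set.Ioi B ∈ 𝓝 z := hcont (Ioi_mem_nhds hgt)
    obtain ⟨y, hyt, hyS⟩ := mem_closure_iff_nhds.1 hzcl _ hev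
    exact absurd hyS.2 (not_le.2 hyt)
  have hsub : S ⊆ Set.pi Set.univ (fun _ : Fin n => Set.Icc (q 0) (q (Fin.last c))) := by
    intro x hx i _
    exact ⟨(hx.1.1.2 i).1.le, (hx.1.1.2 i).2.le⟩
  have hScompact : IsCompact S :=
    IsCompact.of_isClosed_subset (isCompact_univ_pi fun _ => isCompact_Icc) hSclosed hsub
  have hSne : S.Nonempty := ⟨x0, hx0, le_refl B⟩
  have hcont : ContinuousOn (energy n c q u) S := fun x hx =>
    ((hasFDerivAt_energy hq hK hx.1).differentiableAt.continuousAt).continuousWithinAt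
  obtain ⟨z, hzS, hzmin⟩ := hScompact.exists_isMinOn hSne hcont
  rw [isMinOn_iff] at hzmin
  have hminroa : IsMinOn (energy n c q u) (roa n c q ν) z := by
    rw [isMinOn_iff]
    intro y hy
    by_cases hyB : energy n c q u y ≤ B
    · exact hzmin y ⟨hy, hyB⟩
    · push_neg at hyB
      linarith [hzS.2]
  have hlocal : IsLocalMin (energy n c q u) z :=
    hminroa.isLocalMin (isOpen_roa.mem_nhds hzS.1)
  exact ⟨z, hzS.1, hlocal.fderiv_eq_zero⟩

lemma hessian_eq (hq : StrictMono q) (hK : ∀ m, IsBlock ν (K m) m)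
    {x : Fin n → ℝ} (hx : x ∈ roa n c q ν) (k i : Fin n) :
    hessian n c q u x k i = D2til q u K x (Pi.single k 1) (Pi.single i 1) := by
  show iteratedFDeriv ℝ 2 (energy n c q u) x ![Pi.single k 1, Pi.single i 1] = _
  rw [iteratedFDeriv_two_apply]
  simp only [Matrix.cons_val_zero, Matrix.cons_val_one, Matrix.head_cons]
  rw [fderiv_fderiv_energy hq hK hx]

lemma posdef_hessian (hq : StrictMono q) (hu : ∀ j, 0 < u j)
    (hK : ∀ m, IsBlock ν (K m) m) {x : Fin n → ℝ} (hx : x ∈ roa n c q ν) :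
    (hessian n c q u x).PosDef := by
  have hh : ∀ k i, hessian n c q u x k i = D2til q u K x (Pi.single k 1) (Pi.single i 1) :=
    hessian_eq hq hK hx
  have hv' : ∀ v : Fin n → ℝ, v = ∑ i : Fin n, v i • (Pi.single i (1:ℝ) : Fin n → ℝ) := by
    intro v
    funext j
    rw [Finset.sum_apply]
    simp [Pi.single_apply]
  refine Matrix.PosDef.of_dotProduct_mulVec_pos ?_ ?_
  · show (hessian n c q u x).conjTranspose = hessian n c q u x
    ext k i
    rw [Matrix.conjTranspose_apply]
    simp only [star_trivial]
    rw [hh, hh, D2til_symm]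
  · intro v hv
    have hstar : star v = v := by
      funext i
      simp [star_trivial]
    have hqq : dotProduct (star v) (Matrix.mulVec (hessian n c q u x) v) = D2til q u K x v v := by
      rw [hstar]
      unfold dotProduct Matrix.mulVec
      calc ∑ k, v k * ∑ i, hessian n c q u x k i * v i
          = ∑ k, ∑ i, v k * D2til q u K x (Pi.single k 1) (Pi.single i 1) * v i := by
            refine Finset.sum_congr rfl fun k _ => ?_
            rw [Finset.mul_sum]
            refine Finset.sum_congr rfl fun i _ => ?_
            rw [hh]; ring
        _ = D2til q u K x v v := by
            conv_rhs => rw [hv' v]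
            simp only [map_sum, map_smul, ContinuousLinearMap.coe_sum', Finset.sum_apply,
              ContinuousLinearMap.coe_smul', Pi.smul_apply, smul_eq_mul, Finset.mul_sum]
            refine Finset.sum_congr rfl fun k _ => Finset.sum_congr rfl fun i _ => by rw [D2til_symm]; ring
    rw [hqq]
    exact D2til_pos hq hu hK hx hv

end Stmt0Aux

/-- **Theorem 1.** For a control `u` with all components strictly positive and any `ν` with
`ν₁ + ⋯ + ν_c = n`, the energy `V(·,u)` is strictly convex on the convex set `𝒮(ν)`, the
gradient equation `∇ₓV(x,u) = 0` has exactly one solution `x_ss` in `𝒮(ν)`, and at this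
solution the Hessian of `V(·,u)` is positive definite. -/
theorem stmt0 (n c : ℕ) (hn : 1 ≤ n) (hc : 1 ≤ c)
    (q : Fin (c + 1) → ℝ) (hq : StrictMono q)
    (u : Fin (c + 1) → ℝ) (hu : ∀ j, 0 < u j)
    (ν : Fin c → ℕ) (hν : ∑ k, ν k = n) :
    StrictConvexOn ℝ (roa n c q ν) (energy n c q u) ∧
    (∃! xss : Fin n → ℝ, xss ∈ roa n c q ν ∧ fderiv ℝ (energy n c q u) xss = 0) ∧
    (∀ xss ∈ roa n c q ν, fderiv ℝ (energy n c q u) xss = 0 →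
      (hessian n c q u xss).PosDef) := by
  classical
  have hb : ∀ m : Fin n, ∃ k : Fin c, Stmt0Aux.IsBlock ν k m :=
    fun m => Stmt0Aux.exists_block hν m
  choose K hK using hb
  refine ⟨Stmt0Aux.strictConvexOn_energy hq hu hK, ?_, ?_⟩
  · obtain ⟨z, hz, hzcrit⟩ := Stmt0Aux.exists_min hq hu hK (fun m => ⟨K m, hK m⟩)
    refine ⟨z, ⟨hz, hzcrit⟩, ?_⟩
    rintro w ⟨hw, hwcrit⟩
    by_contra hne
    have h1 := Stmt0Aux.strict_min hq hu hK hw hwcrit hz (Ne.symm hne)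
    have h2 := Stmt0Aux.strict_min hq hu hK hz hzcrit hw hne
    linarith
  · intro xss hxss _
    exact Stmt0Aux.posdef_hessian hq hu hK hxss
end

section
/- Let u = (u_0,…,u_c) have all components strictly positive. Then at every point x ∈ ℝ^n whose coordinates are pairwise distinct and distinct from all q_j, the Hessian matrix H(x,u) of V(·,u) is positive definite; equivalently, every eigenvalue of the Jacobian of the force field f(·,u) = −∇_x V(·,u) at x is strictly negative. -/
open Finset Filter Topology

/-! ### Auxiliary lemmas -/

noncomputable def g1 (t : ℝ) : ℝ := -t / |t| ^ 3
noncomputable def g2 (t : ℝ) : ℝ := 2 / |t| ^ 3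

lemma g2_nonneg (t : ℝ) : 0 ≤ g2 t := by
  unfold g2; positivity

lemma g2_pos {t : ℝ} (ht : t ≠ 0) : 0 < g2 t := by
  unfold g2
  have : 0 < |t| := abs_pos.2 ht
  positivity

lemma habs1 {t : ℝ} (ht : t ≠ 0) : HasDerivAt (fun s => |s|⁻¹) (g1 t) t := by
  rcases ht.lt_or_gt with h | h
  · have hev : (fun s : ℝ => (-s)⁻¹) =ᶠ[𝓝 t] fun s => |s|⁻¹ := by
      filter_upwards [eventually_lt_nhds h] with s hs
      rw [abs_of_neg hs]
    have hd : HasDerivAt (fun s : ℝ => (-s)⁻¹) (g1 t) t := by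
      have := ((hasDerivAt_neg t).inv (by simpa using h.ne))
      refine this.congr_deriv (Eq.symm ?_)
      unfold g1
      rw [abs_of_neg h]
      field_simp [ht]
    exact hd.congr_of_eventuallyEq hev.symm
  · have hev : (fun s : ℝ => s⁻¹) =ᶠ[𝓝 t] fun s => |s|⁻¹ := by
      filter_upwards [eventually_gt_nhds h] with s hs
      rw [abs_of_pos hs]
    have hd : HasDerivAt (fun s : ℝ => s⁻¹) (g1 t) t := by
      have := (hasDerivAt_id t).inv h.ne'
      refine this.congr_deriv (Eq.symm ?_)
      unfold g1
      rw [abs_of_pos h]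
      field_simp [ht]
      ring
      rfl
    exact hd.congr_of_eventuallyEq hev.symm

lemma habs2 {t : ℝ} (ht : t ≠ 0) : HasDerivAt g1 (g2 t) t := by
  rcases ht.lt_or_gt with h | h
  · have hev : (fun s : ℝ => (s ^ 2)⁻¹) =ᶠ[𝓝 t] g1 := by
      filter_upwards [eventually_lt_nhds h] with s hs
      unfold g1
      rw [abs_of_neg hs]
      field_simp [hs.ne]
    have hd : HasDerivAt (fun s : ℝ => (s ^ 2)⁻¹) (g2 t) t := by
      have := (hasDerivAt_pow 2 t).inv (pow_ne_zero 2 ht)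
      refine this.congr_deriv (Eq.symm ?_)
      unfold g2
      rw [abs_of_neg h]
      field_simp [ht]
      ring
    exact hd.congr_of_eventuallyEq hev.symm
  · have hev : (fun s : ℝ => -(s ^ 2)⁻¹) =ᶠ[𝓝 t] g1 := by
      filter_upwards [eventually_gt_nhds h] with s hs
      unfold g1
      rw [abs_of_pos hs]
      field_simp [hs.ne']
    have hd : HasDerivAt (fun s : ℝ => -(s ^ 2)⁻¹) (g2 t) t := by
      have := ((hasDerivAt_pow 2 t).inv (pow_ne_zero 2 ht)).neg
      refine this.congr_deriv (Eq.symm ?_)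
      unfold g2
      rw [abs_of_pos h]
      field_simp [ht]
      ring
    exact hd.congr_of_eventuallyEq hev.symm

/-- first derivative of `z ↦ w * |L z + b|⁻¹`. -/
lemma term_fderiv {n : ℕ} (L : (Fin n → ℝ) →L[ℝ] ℝ) (b w : ℝ) {y : Fin n → ℝ}
    (ht : L y + b ≠ 0) :
    HasFDerivAt (fun z => w * |L z + b|⁻¹) ((w * g1 (L y + b)) • L) y := by
  have haff : HasFDerivAt (fun z => L z + b) L y := L.hasFDerivAt.add_const b
  have h1 : HasFDerivAt (fun z => |L z + b|⁻¹) (g1 (L y + b) • L) y :=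
    by have := (habs1 ht).comp_hasFDerivAt y haff; exact this
  simpa [smul_smul] using h1.const_mul w

/-- second derivative of `z ↦ w * |L z + b|⁻¹`. -/
lemma term_fderiv2 {n : ℕ} (L : (Fin n → ℝ) →L[ℝ] ℝ) (b w : ℝ) {x : Fin n → ℝ}
    (ht : L x + b ≠ 0) :
    HasFDerivAt (fun y => (w * g1 (L y + b)) • L)
      (((w * g2 (L x + b)) • L).smulRight L) x := by
  have haff : HasFDerivAt (fun z => L z + b) L x := L.hasFDerivAt.add_const b
  have h1 : HasFDerivAt (fun z => g1 (L z + b)) (g2 (L x + b) • L) x :=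
    by have := (habs2 ht).comp_hasFDerivAt x haff; exact this
  have h2 : HasFDerivAt (fun z => w * g1 (L z + b)) ((w * g2 (L x + b)) • L) x := by
    simpa [smul_smul] using h1.const_mul w
  exact h2.smul_const L

section main

variable {n c : ℕ} (q u : Fin (c + 1) → ℝ)

/-- coordinate projection -/
noncomputable def pr (i : Fin n) : (Fin n → ℝ) →L[ℝ] ℝ :=
  ContinuousLinearMap.proj i

/-- the gradient field of the energy -/
noncomputable def D1 (y : Fin n → ℝ) : (Fin n → ℝ) →L[ℝ] ℝ :=
  (∑ i : Fin n, ∑ j ∈ Finset.univ \ {i},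
      ((1 / 2 : ℝ) * g1 (y i - y j)) • (pr i - pr j)) +
    ∑ i : Fin n, ∑ j : Fin (c + 1), (u j * g1 (y i - q j)) • (pr i : (Fin n → ℝ) →L[ℝ] ℝ)

lemma energy_eq : energy n c q u = fun x =>
    (∑ i : Fin n, ∑ j ∈ Finset.univ \ {i}, (1 / 2 : ℝ) * |x i - x j|⁻¹) +
      ∑ i : Fin n, ∑ j : Fin (c + 1), u j * |x i - q j|⁻¹ := by
  funext z
  simp [energy, Finset.mul_sum, one_div, div_eq_mul_inv]

lemma hV {y : Fin n → ℝ} (hy : y ∈ goodSet n c q) :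
    HasFDerivAt (energy n c q u) (D1 q u y) y := by
  rw [energy_eq]
  apply HasFDerivAt.add
  · apply HasFDerivAt.fun_sum
    intro i _
    apply HasFDerivAt.fun_sum
    intro j hj
    have hij : i ≠ j := by
      simp only [Finset.mem_sdiff, Finset.mem_singleton] at hj
      exact fun h => hj.2 h.symm
    have ht : (pr i - pr j) y + 0 ≠ 0 := by
      simpa [pr, sub_eq_zero] using hy.1 i j hij
    have := term_fderiv (pr i - pr j) 0 (1 / 2 : ℝ) ht
    simpa [pr] using this
  · apply HasFDerivAt.fun_sum
    intro i _
    apply HasFDerivAt.fun_sum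
    intro j _
    have ht : pr i y + (-q j) ≠ 0 := by
      simpa [pr, ← sub_eq_add_neg, sub_eq_zero] using hy.2 i j
    have := term_fderiv (pr (n := n) i) (-q j) (u j) ht
    simpa [pr, sub_eq_add_neg] using this

lemma good_eventually {x : Fin n → ℝ} (hx : x ∈ goodSet n c q) :
    ∀ᶠ y in 𝓝 x, y ∈ goodSet n c q := by
  have h1 : ∀ᶠ y in 𝓝 x, ∀ i j : Fin n, i ≠ j → y i ≠ y j := by
    refine Filter.eventually_all.2 fun i => Filter.eventually_all.2 fun j => ?_
    by_cases hij : i ≠ j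
    · have hne : x i - x j ≠ 0 := sub_ne_zero_of_ne (hx.1 i j hij)
      have := (((continuous_apply i).sub (continuous_apply j)).tendsto x).eventually_ne hne
      filter_upwards [this] with y hy _
      exact sub_ne_zero.1 hy
    · filter_upwards with y h; exact absurd h hij
  have h2 : ∀ᶠ y in 𝓝 x, ∀ (i : Fin n) (j : Fin (c + 1)), y i ≠ q j := by
    refine Filter.eventually_all.2 fun i => Filter.eventually_all.2 fun j => ?_
    exact ((continuous_apply i).tendsto x).eventually_ne (hx.2 i j)
  filter_upwards [h1, h2] with y hy1 hy2
  exact ⟨hy1, hy2⟩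

/-- the Hessian as a continuous bilinear map -/
noncomputable def B2 (x : Fin n → ℝ) :
    (Fin n → ℝ) →L[ℝ] ((Fin n → ℝ) →L[ℝ] ℝ) :=
  (∑ i : Fin n, ∑ j ∈ Finset.univ \ {i},
      (((1 / 2 : ℝ) * g2 (x i - x j)) • (pr i - pr j)).smulRight (pr i - pr j)) +
    ∑ i : Fin n, ∑ j : Fin (c + 1),
      ((u j * g2 (x i - q j)) • (pr i : (Fin n → ℝ) →L[ℝ] ℝ)).smulRight (pr i)

lemma hD1 {x : Fin n → ℝ} (hx : x ∈ goodSet n c q) :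
    HasFDerivAt (D1 q u) (B2 q u x) x := by
  unfold D1 B2
  apply HasFDerivAt.add
  · apply HasFDerivAt.fun_sum
    intro i _
    apply HasFDerivAt.fun_sum
    intro j hj
    have hij : i ≠ j := by
      simp only [Finset.mem_sdiff, Finset.mem_singleton] at hj
      exact fun h => hj.2 h.symm
    have ht : (pr i - pr j) x + 0 ≠ 0 := by
      simpa [pr, sub_eq_zero] using hx.1 i j hij
    have := term_fderiv2 (pr i - pr j) 0 (1 / 2 : ℝ) ht
    simpa [pr] using this
  · apply HasFDerivAt.fun_sum
    intro i _
    apply HasFDerivAt.fun_sum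
    intro j _
    have ht : pr i x + (-q j) ≠ 0 := by
      simpa [pr, ← sub_eq_add_neg, sub_eq_zero] using hx.2 i j
    have := term_fderiv2 (pr (n := n) i) (-q j) (u j) ht
    simpa [pr, sub_eq_add_neg] using this

lemma snd_deriv {x : Fin n → ℝ} (hx : x ∈ goodSet n c q) :
    fderiv ℝ (fderiv ℝ (energy n c q u)) x = B2 q u x := by
  have hev : fderiv ℝ (energy n c q u) =ᶠ[𝓝 x] D1 q u := by
    filter_upwards [good_eventually q hx] with y hy
    exact (hV q u hy).fderiv
  rw [hev.fderiv_eq]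
  exact (hD1 q u hx).fderiv

lemma hessian_eq {x : Fin n → ℝ} (hx : x ∈ goodSet n c q) (k i : Fin n) :
    hessian n c q u x k i = B2 q u x (Pi.single k 1) (Pi.single i 1) := by
  show iteratedFDeriv ℝ 2 (energy n c q u) x ![Pi.single k 1, Pi.single i 1] = _
  rw [iteratedFDeriv_two_apply, snd_deriv q u hx]
  simp

lemma B2_apply (x : Fin n → ℝ) (v w : Fin n → ℝ) :
    B2 q u x v w =
      (∑ i : Fin n, ∑ j ∈ Finset.univ \ {i},
          (1 / 2 : ℝ) * g2 (x i - x j) * ((v i - v j) * (w i - w j))) +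
        ∑ i : Fin n, ∑ j : Fin (c + 1), u j * g2 (x i - q j) * (v i * w i) := by
  simp only [B2, ContinuousLinearMap.add_apply, ContinuousLinearMap.coe_sum',
    Finset.sum_apply, ContinuousLinearMap.smulRight_apply, ContinuousLinearMap.smul_apply,
    ContinuousLinearMap.coe_sub', Pi.sub_apply, pr, ContinuousLinearMap.proj_apply,
    smul_eq_mul]
  congr 1 <;>
    exact Finset.sum_congr rfl fun i _ => Finset.sum_congr rfl fun j _ => by ring

lemma single_expand (w : Fin n → ℝ) : w = ∑ i : Fin n, w i • (Pi.single i 1 : Fin n → ℝ) := by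
  conv_lhs => rw [← Finset.univ_sum_single w]
  refine Finset.sum_congr rfl fun i _ => funext fun j => ?_
  rcases eq_or_ne j i with h | h
  · subst h; simp
  · simp [h]

lemma bilin (T : (Fin n → ℝ) →L[ℝ] ((Fin n → ℝ) →L[ℝ] ℝ)) (v : Fin n → ℝ) :
    ∑ k : Fin n, v k * ∑ i : Fin n, T (Pi.single k 1) (Pi.single i 1) * v i = T v v := by
  have h2 : ∀ a : Fin n → ℝ, T a v = ∑ i : Fin n, T a (Pi.single i 1) * v i := by
    intro a
    conv_lhs => rw [single_expand v]
    rw [map_sum]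
    refine Finset.sum_congr rfl fun i _ => ?_
    rw [map_smul, smul_eq_mul]
    ring
  have h1 : ∀ b : Fin n → ℝ, T v b = ∑ k : Fin n, v k * T (Pi.single k 1) b := by
    intro b
    conv_lhs => rw [single_expand v]
    rw [map_sum, ContinuousLinearMap.sum_apply]
    refine Finset.sum_congr rfl fun k _ => ?_
    rw [map_smul, ContinuousLinearMap.smul_apply, smul_eq_mul]
  calc ∑ k : Fin n, v k * ∑ i : Fin n, T (Pi.single k 1) (Pi.single i 1) * v i
      = ∑ k : Fin n, ∑ i : Fin n,
          v k * (T (Pi.single k 1) (Pi.single i 1) * v i) := by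
        simp [Finset.mul_sum]
    _ = ∑ i : Fin n, ∑ k : Fin n,
          v k * (T (Pi.single k 1) (Pi.single i 1) * v i) := Finset.sum_comm
    _ = ∑ i : Fin n, T v (Pi.single i 1) * v i := by
        refine Finset.sum_congr rfl fun i _ => ?_
        rw [h1 (Pi.single i 1), Finset.sum_mul]
        exact Finset.sum_congr rfl fun k _ => by ring
    _ = T v v := (h2 v).symm

end main

/-- For a control `u` with all components strictly positive, the Hessian matrix `H(x,u)` of
`V(·,u)` is positive definite at every point `x` with pairwise distinct coordinates distinct
from all electrode positions. -/
theorem stmt6 (n c : ℕ) (hn : 1 ≤ n) (hc : 1 ≤ c)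
    (q : Fin (c + 1) → ℝ) (hq : StrictMono q)
    (u : Fin (c + 1) → ℝ) (hu : ∀ j, 0 < u j)
    (x : Fin n → ℝ) (hx : x ∈ goodSet n c q) :
    (hessian n c q u x).PosDef := by
  rw [Matrix.posDef_iff_dotProduct_mulVec]
  constructor
  · show Matrix.conjTranspose (hessian n c q u x) = hessian n c q u x
    ext k i
    rw [Matrix.conjTranspose_apply, star_trivial, hessian_eq q u hx, hessian_eq q u hx,
      B2_apply, B2_apply]
    congr 1 <;>
      exact Finset.sum_congr rfl fun a _ => Finset.sum_congr rfl fun b _ => by ring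
  · intro v hv
    have hdot : dotProduct (star v) ((hessian n c q u x).mulVec v) =
        ∑ k : Fin n, v k * ∑ i : Fin n, hessian n c q u x k i * v i := by
      simp [dotProduct, Matrix.mulVec]
    rw [hdot]
    have : ∑ k : Fin n, v k * ∑ i : Fin n, hessian n c q u x k i * v i
        = B2 q u x v v := by
      rw [← bilin (B2 q u x) v]
      exact Finset.sum_congr rfl fun k _ => by
        congr 1
        exact Finset.sum_congr rfl fun i _ => by rw [hessian_eq q u hx]
    rw [this, B2_apply]
    have hS1 : 0 ≤ ∑ i : Fin n, ∑ j ∈ Finset.univ \ {i},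
        (1 / 2 : ℝ) * g2 (x i - x j) * ((v i - v j) * (v i - v j)) := by
      refine Finset.sum_nonneg fun i _ => Finset.sum_nonneg fun j _ => ?_
      exact mul_nonneg (mul_nonneg (by norm_num) (g2_nonneg _)) (mul_self_nonneg _)
    have hS2 : 0 < ∑ i : Fin n, ∑ j : Fin (c + 1), u j * g2 (x i - q j) * (v i * v i) := by
      obtain ⟨i₀, hi₀⟩ := Function.ne_iff.1 hv
      refine Finset.sum_pos' (fun i _ => Finset.sum_nonneg fun j _ =>
        mul_nonneg (mul_nonneg (hu j).le (g2_nonneg _)) (mul_self_nonneg _)) ⟨i₀,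
        Finset.mem_univ _, ?_⟩
      refine Finset.sum_pos (fun j _ => ?_) Finset.univ_nonempty
      have hne : x i₀ - q j ≠ 0 := sub_ne_zero_of_ne (hx.2 i₀ j)
      exact mul_pos (mul_pos (hu j) (g2_pos hne)) (mul_self_pos.2 (by simpa using hi₀))
    linarith
end

section
/- Let u = (u_0,…,u_c) have all components strictly positive and let ν ∈ ℕ₀^c satisfy ν_1 + ⋯ + ν_c = n. Then the restriction of V(·,u) to the convex open set 𝒮(ν) is strictly convex. -/
open Finset Filter Topology

/- ### Auxiliary lemmas -/

theorem comboLT' {a b p r p' r' : ℝ} (ha : 0 ≤ a) (hb : 0 ≤ b) (hab : a + b = 1)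
    (h1 : p < p') (h2 : r < r') : a*p + b*r < a*p' + b*r' := by
  rcases eq_or_lt_of_le ha with h|h
  · rw [← h] at hab ⊢; nlinarith
  · nlinarith [mul_le_mul_of_nonneg_left h2.le hb, mul_lt_mul_of_pos_left h1 h]

theorem comboPos' {a b p r : ℝ} (hp : 0 < p) (hr : 0 < r) (ha : 0 ≤ a) (hb : 0 ≤ b)
    (hab : a + b = 1) : 0 < a*p + b*r := by
  rcases eq_or_lt_of_le ha with h|h
  · rw [← h] at hab ⊢; nlinarith
  · nlinarith [mul_nonneg hb hr.le, mul_pos h hp]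

theorem constComboLT {a b w p r : ℝ} (ha : 0 ≤ a) (hb : 0 ≤ b) (hab : a + b = 1)
    (h1 : w < p) (h2 : w < r) : w < a*p + b*r := by
  have h3 := comboLT' ha hb hab h1 h2
  have h4 : a*w + b*w = w := by linear_combination w * hab
  linarith

theorem comboConstLT {a b w p r : ℝ} (ha : 0 ≤ a) (hb : 0 ≤ b) (hab : a + b = 1)
    (h1 : p < w) (h2 : r < w) : a*p + b*r < w := by
  have h3 := comboLT' ha hb hab h1 h2
  have h4 : a*w + b*w = w := by linear_combination w * hab
  linarith

theorem invComboLE' {a b p r : ℝ} (hp : 0 < p) (hr : 0 < r) (ha : 0 ≤ a) (hb : 0 ≤ b)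
    (hab : a + b = 1) : (a*p + b*r)⁻¹ ≤ a*p⁻¹ + b*r⁻¹ := by
  have h1 : a*p⁻¹ + b*r⁻¹ = (a*r + b*p)/(p*r) := by field_simp
  have hs := comboPos' hp hr ha hb hab
  rw [h1, inv_eq_one_div, div_le_div_iff₀ hs (by positivity)]
  have key : (a*r + b*p)*(a*p + b*r) = (a+b)^2*(p*r) + a*b*(p-r)^2 := by ring
  rw [key, hab]
  nlinarith [mul_nonneg (mul_nonneg ha hb) (sq_nonneg (p - r))]

theorem invComboLT' {a b p r : ℝ} (hp : 0 < p) (hr : 0 < r) (hpr : p ≠ r) (ha : 0 < a)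
    (hb : 0 < b) (hab : a + b = 1) : (a*p + b*r)⁻¹ < a*p⁻¹ + b*r⁻¹ := by
  have h1 : a*p⁻¹ + b*r⁻¹ = (a*r + b*p)/(p*r) := by field_simp
  have hs := comboPos' hp hr ha.le hb.le hab
  rw [h1, inv_eq_one_div, div_lt_div_iff₀ hs (by positivity)]
  have h2 : 0 < (p - r)^2 := by have := sub_ne_zero.2 hpr; positivity
  have key : (a*r + b*p)*(a*p + b*r) = (a+b)^2*(p*r) + a*b*(p-r)^2 := by ring
  rw [key, hab]
  nlinarith [mul_pos (mul_pos ha hb) h2]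

theorem mulInvLE {a b p r w : ℝ} (hp : 0 < p) (hr : 0 < r) (ha : 0 ≤ a) (hb : 0 ≤ b)
    (hab : a + b = 1) (hw : 0 ≤ w) : w/(a*p + b*r) ≤ a*(w/p) + b*(w/r) := by
  have h2 := mul_le_mul_of_nonneg_left (invComboLE' hp hr ha hb hab) hw
  rw [div_eq_mul_inv, div_eq_mul_inv, div_eq_mul_inv]
  calc w*(a*p + b*r)⁻¹ ≤ w*(a*p⁻¹ + b*r⁻¹) := h2
    _ = a*(w*p⁻¹) + b*(w*r⁻¹) := by ring

theorem mulInvLT {a b p r w : ℝ} (hp : 0 < p) (hr : 0 < r) (hpr : p ≠ r) (ha : 0 < a)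
    (hb : 0 < b) (hab : a + b = 1) (hw : 0 < w) : w/(a*p + b*r) < a*(w/p) + b*(w/r) := by
  have h2 := mul_lt_mul_of_pos_left (invComboLT' hp hr hpr ha hb hab) hw
  rw [div_eq_mul_inv, div_eq_mul_inv, div_eq_mul_inv]
  calc w*(a*p + b*r)⁻¹ < w*(a*p⁻¹ + b*r⁻¹) := h2
    _ = a*(w*p⁻¹) + b*(w*r⁻¹) := by ring

theorem extLE {a b w1 w2 e c0 : ℝ} (ha : 0 ≤ a) (hb : 0 ≤ b) (hab : a + b = 1) (hc0 : 0 ≤ c0)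
    (h : (e < w1 ∧ e < w2) ∨ (w1 < e ∧ w2 < e)) :
    c0 / |(a*w1 + b*w2) - e| ≤ a*(c0/|w1 - e|) + b*(c0/|w2 - e|) := by
  rcases h with ⟨h1, h2⟩|⟨h1, h2⟩
  · have e1 : (a*w1 + b*w2) - e = a*(w1 - e) + b*(w2 - e) := by linear_combination e * hab
    rw [e1, abs_of_pos (comboPos' (sub_pos.2 h1) (sub_pos.2 h2) ha hb hab),
      abs_of_pos (sub_pos.2 h1), abs_of_pos (sub_pos.2 h2)]
    exact mulInvLE (sub_pos.2 h1) (sub_pos.2 h2) ha hb hab hc0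
  · have e1 : (a*w1 + b*w2) - e = -(a*(e - w1) + b*(e - w2)) := by linear_combination e * hab
    rw [e1, abs_neg, abs_of_pos (comboPos' (sub_pos.2 h1) (sub_pos.2 h2) ha hb hab),
      show w1 - e = -(e - w1) by ring, abs_neg, abs_of_pos (sub_pos.2 h1),
      show w2 - e = -(e - w2) by ring, abs_neg, abs_of_pos (sub_pos.2 h2)]
    exact mulInvLE (sub_pos.2 h1) (sub_pos.2 h2) ha hb hab hc0

theorem extLT {a b w1 w2 e c0 : ℝ} (ha : 0 < a) (hb : 0 < b) (hab : a + b = 1) (hc0 : 0 < c0)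
    (hw : w1 ≠ w2) (h : (e < w1 ∧ e < w2) ∨ (w1 < e ∧ w2 < e)) :
    c0 / |(a*w1 + b*w2) - e| < a*(c0/|w1 - e|) + b*(c0/|w2 - e|) := by
  rcases h with ⟨h1, h2⟩|⟨h1, h2⟩
  · have e1 : (a*w1 + b*w2) - e = a*(w1 - e) + b*(w2 - e) := by linear_combination e * hab
    rw [e1, abs_of_pos (comboPos' (sub_pos.2 h1) (sub_pos.2 h2) ha.le hb.le hab),
      abs_of_pos (sub_pos.2 h1), abs_of_pos (sub_pos.2 h2)]
    exact mulInvLT (sub_pos.2 h1) (sub_pos.2 h2)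
      (fun hpr => hw (by linarith [sub_left_injective.eq_iff.1 hpr])) ha hb hab hc0
  · have e1 : (a*w1 + b*w2) - e = -(a*(e - w1) + b*(e - w2)) := by linear_combination e * hab
    rw [e1, abs_neg, abs_of_pos (comboPos' (sub_pos.2 h1) (sub_pos.2 h2) ha.le hb.le hab),
      show w1 - e = -(e - w1) by ring, abs_neg, abs_of_pos (sub_pos.2 h1),
      show w2 - e = -(e - w2) by ring, abs_neg, abs_of_pos (sub_pos.2 h2)]
    refine mulInvLT (sub_pos.2 h1) (sub_pos.2 h2) (fun hpr => hw (by nlinarith)) ha hb hab hc0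

theorem intLE {a b x1 x2 y1 y2 : ℝ} (ha : 0 ≤ a) (hb : 0 ≤ b) (hab : a + b = 1)
    (hx : x1 < x2) (hy : y1 < y2) :
    1 / |(a*x1 + b*y1) - (a*x2 + b*y2)| ≤ a*(1/|x1 - x2|) + b*(1/|y1 - y2|) := by
  have e1 : (a*x1 + b*y1) - (a*x2 + b*y2) = -(a*(x2 - x1) + b*(y2 - y1)) := by ring
  rw [e1, abs_neg, abs_of_pos (comboPos' (sub_pos.2 hx) (sub_pos.2 hy) ha hb hab),
    show x1 - x2 = -(x2 - x1) by ring, abs_neg, abs_of_pos (sub_pos.2 hx),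
    show y1 - y2 = -(y2 - y1) by ring, abs_neg, abs_of_pos (sub_pos.2 hy)]
  exact mulInvLE (sub_pos.2 hx) (sub_pos.2 hy) ha hb hab zero_le_one

theorem natBlock' (f : ℕ → ℕ) : ∀ c m : ℕ, m < ∑ j ∈ Finset.range c, f j →
    ∃ k, k < c ∧ ∑ j ∈ Finset.range k, f j ≤ m ∧ m < ∑ j ∈ Finset.range k, f j + f k := by
  intro c
  induction c with
  | zero => simp
  | succ c ih =>
    intro m hm
    rcases lt_or_ge m (∑ j ∈ Finset.range c, f j) with h|h
    · obtain ⟨k, hk, h1, h2⟩ := ih m h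
      exact ⟨k, Nat.lt_succ_of_lt hk, h1, h2⟩
    · refine ⟨c, Nat.lt_succ_self c, h, ?_⟩
      rwa [Finset.sum_range_succ] at hm

theorem sumIio' (c : ℕ) (ν : Fin c → ℕ) (k : Fin c) :
    ∑ j ∈ Finset.Iio k, ν j = ∑ j ∈ Finset.range k.val,
      (fun j => if h : j < c then ν ⟨j, h⟩ else 0) j := by
  refine Finset.sum_nbij' (fun j => (j : ℕ)) (fun j => if h : j < c then ⟨j, h⟩ else k)
    ?_ ?_ ?_ ?_ ?_
  · intro j hj; simp only [Finset.mem_Iio] at hj; simpa using hj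
  · intro j hj; simp only [Finset.mem_range] at hj
    have hjc : j < c := hj.trans k.isLt
    simp [hjc, Finset.mem_Iio, Fin.lt_def, hj]
  · intro j hj; simp
  · intro j hj; simp only [Finset.mem_range] at hj
    have hjc : j < c := hj.trans k.isLt
    simp [hjc]
  · intro j hj; simp [j.isLt]

/-- For a control `u` with all components strictly positive and `ν₁ + ⋯ + ν_c = n`, the
restriction of `V(·,u)` to the convex open set `𝒮(ν)` is strictly convex. -/
theorem stmt7 (n c : ℕ) (hn : 1 ≤ n) (hc : 1 ≤ c)
    (q : Fin (c + 1) → ℝ) (hq : StrictMono q)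
    (u : Fin (c + 1) → ℝ) (hu : ∀ j, 0 < u j)
    (ν : Fin c → ℕ) (hν : ∑ k, ν k = n) :
    StrictConvexOn ℝ (roa n c q ν) (energy n c q u) := by
  classical
  -- every index belongs to a block
  have hblock : ∀ m : Fin n, ∃ k : Fin c,
      (∑ j ∈ Finset.Iio k, ν j) ≤ (m : ℕ) ∧ (m : ℕ) < (∑ j ∈ Finset.Iio k, ν j) + ν k := by
    intro m
    set ν' : ℕ → ℕ := fun j => if h : j < c then ν ⟨j, h⟩ else 0 with hν'
    have htot : ∑ j ∈ Finset.range c, ν' j = n := by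
      rw [← Fin.sum_univ_eq_sum_range ν' c, ← hν]
      exact Finset.sum_congr rfl (fun i _ => by simp [hν', i.isLt])
    obtain ⟨k, hk, h1, h2⟩ := natBlock' ν' c m (by rw [htot]; exact m.isLt)
    refine ⟨⟨k, hk⟩, ?_, ?_⟩
    · rw [sumIio']; exact h1
    · rw [sumIio']
      have : ν' k = ν ⟨k, hk⟩ := by simp [hν', hk]
      rw [show ν ⟨k, hk⟩ = ν' k from this.symm]
      exact h2
  constructor
  · -- convexity of the set
    rintro x ⟨⟨hx1, hx2⟩, hx3⟩ y ⟨⟨hy1, hy2⟩, hy3⟩ a b ha hb hab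
    have hz : ∀ i, (a • x + b • y) i = a * x i + b * y i := fun i => by
      simp [smul_eq_mul]
    refine ⟨⟨fun i j hij => ?_, fun i => ⟨?_, ?_⟩⟩, fun k m h1 h2 => ⟨?_, ?_⟩⟩
    · rw [hz, hz]; exact comboLT' ha hb hab (hx1 i j hij) (hy1 i j hij)
    · rw [hz]; exact constComboLT ha hb hab (hx2 i).1 (hy2 i).1
    · rw [hz]; exact comboConstLT ha hb hab (hx2 i).2 (hy2 i).2
    · rw [hz]; exact constComboLT ha hb hab (hx3 k m h1 h2).1 (hy3 k m h1 h2).1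
    · rw [hz]; exact comboConstLT ha hb hab (hx3 k m h1 h2).2 (hy3 k m h1 h2).2
  · -- strict convexity inequality
    rintro x hx y hy hxy a b ha hb hab
    obtain ⟨m0, hm0⟩ : ∃ m, x m ≠ y m := Function.ne_iff.1 hxy
    have hz : ∀ i, (a • x + b • y) i = a * x i + b * y i := fun i => by
      simp [smul_eq_mul]
    choose K hK1 hK2 using hblock
    have hxb : ∀ i, q (K i).castSucc < x i ∧ x i < q (K i).succ :=
      fun i => hx.2 (K i) i (hK1 i) (hK2 i)
    have hyb : ∀ i, q (K i).castSucc < y i ∧ y i < q (K i).succ :=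
      fun i => hy.2 (K i) i (hK1 i) (hK2 i)
    -- each electrode is on a fixed side of each particle
    have hside : ∀ (i : Fin n) (j : Fin (c + 1)),
        (q j < x i ∧ q j < y i) ∨ (x i < q j ∧ y i < q j) := by
      intro i j
      rcases le_or_gt (j : ℕ) ((K i) : ℕ) with h|h
      · left
        have hqj : q j ≤ q (K i).castSucc := hq.monotone (by
          rw [Fin.le_def]; simpa using h)
        exact ⟨lt_of_le_of_lt hqj (hxb i).1, lt_of_le_of_lt hqj (hyb i).1⟩
      · right
        have hqj : q (K i).succ ≤ q j := hq.monotone (by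
          rw [Fin.le_def]; simpa using h)
        exact ⟨lt_of_lt_of_le (hxb i).2 hqj, lt_of_lt_of_le (hyb i).2 hqj⟩
    simp only [energy, smul_eq_mul]
    have hS : (∑ i : Fin n, ∑ j ∈ Finset.univ \ {i}, 1 / |(a • x + b • y) i - (a • x + b • y) j|)
        ≤ a * ∑ i : Fin n, ∑ j ∈ Finset.univ \ {i}, 1 / |x i - x j|
          + b * ∑ i : Fin n, ∑ j ∈ Finset.univ \ {i}, 1 / |y i - y j| := by
      rw [Finset.mul_sum, Finset.mul_sum, ← Finset.sum_add_distrib]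
      refine Finset.sum_le_sum fun i _ => ?_
      rw [Finset.mul_sum, Finset.mul_sum, ← Finset.sum_add_distrib]
      refine Finset.sum_le_sum fun j hj => ?_
      have hij : j ≠ i := by
        simp only [Finset.mem_sdiff, Finset.mem_singleton] at hj; exact hj.2
      rcases lt_or_gt_of_ne hij.symm with h|h
      · rw [hz i, hz j]
        exact intLE ha.le hb.le hab (hx.1.1 i j h) (hy.1.1 i j h)
      · rw [abs_sub_comm ((a • x + b • y) i), abs_sub_comm (x i), abs_sub_comm (y i),
          hz i, hz j]
        exact intLE ha.le hb.le hab (hx.1.1 j i h) (hy.1.1 j i h)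
    have hT : (∑ i : Fin n, ∑ j : Fin (c + 1), u j / |(a • x + b • y) i - q j|)
        < a * ∑ i : Fin n, ∑ j : Fin (c + 1), u j / |x i - q j|
          + b * ∑ i : Fin n, ∑ j : Fin (c + 1), u j / |y i - q j| := by
      rw [Finset.mul_sum, Finset.mul_sum, ← Finset.sum_add_distrib]
      refine Finset.sum_lt_sum (fun i _ => ?_) ⟨m0, Finset.mem_univ m0, ?_⟩
      · rw [Finset.mul_sum, Finset.mul_sum, ← Finset.sum_add_distrib]
        refine Finset.sum_le_sum fun j _ => ?_
        rw [hz i]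
        exact extLE ha.le hb.le hab (hu j).le (hside i j)
      · rw [Finset.mul_sum, Finset.mul_sum, ← Finset.sum_add_distrib]
        refine Finset.sum_lt_sum_of_nonempty Finset.univ_nonempty fun j _ => ?_
        rw [hz m0]
        exact extLT ha hb hab (hu j) hm0 (hside m0 j)
    linarith
end

section
/- Let u = (u_0,…,u_c) have all components strictly positive, let x ∈ 𝒮(ν), and fix k ∈ {1,…,n}. With all coordinates of x other than x_k held fixed, the function y ↦ f_k(x_1,…,x_{k−1},y,x_{k+1},…,x_n,u), where f_k = −∂V/∂x_k, is strictly decreasing on the open interval (x_k^L, x_k^U). -/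
open Finset Filter Topology

/-- The force on particle `k`: `f_k(x,u) = -∂V/∂x_k(x,u)`, in explicit form. -/
noncomputable def force (n c : ℕ) (q u : Fin (c + 1) → ℝ) (x : Fin n → ℝ) (k : Fin n) : ℝ :=
  ∑ j ∈ Finset.univ \ {k}, Real.sign (x k - x j) / (x k - x j) ^ 2 +
    ∑ j : Fin (c + 1), u j * Real.sign (x k - q j) / (x k - q j) ^ 2

/-- `k′`: the smallest electrode index `j` with `x m < q j`. -/
noncomputable def kPrime (n c : ℕ) (q : Fin (c + 1) → ℝ) (x : Fin n → ℝ) (m : Fin n) :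
    Fin (c + 1) :=
  if h : (Finset.univ.filter fun j : Fin (c + 1) => x m < q j).Nonempty then
    (Finset.univ.filter fun j : Fin (c + 1) => x m < q j).min' h
  else Fin.last c

/-- `x_{m-1}`, with the convention `x_0 = q_0`. -/
noncomputable def xPrev (n c : ℕ) (q : Fin (c + 1) → ℝ) (x : Fin n → ℝ) (m : Fin n) : ℝ :=
  if h : 0 < (m : ℕ) then x ⟨(m : ℕ) - 1, lt_of_le_of_lt (Nat.sub_le _ _) m.isLt⟩ else q 0

/-- `x_{m+1}`, with the convention `x_{n+1} = q_c`. -/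
noncomputable def xNext (n c : ℕ) (q : Fin (c + 1) → ℝ) (x : Fin n → ℝ) (m : Fin n) : ℝ :=
  if h : (m : ℕ) + 1 < n then x ⟨(m : ℕ) + 1, h⟩ else q (Fin.last c)

/-- `x_m^L = max (x_{m-1}, q_{k′-1})`. -/
noncomputable def xLow (n c : ℕ) (q : Fin (c + 1) → ℝ) (x : Fin n → ℝ) (m : Fin n) : ℝ :=
  max (xPrev n c q x m)
    (q ⟨((kPrime n c q x m : ℕ)) - 1,
      lt_of_le_of_lt (Nat.sub_le _ _) (kPrime n c q x m).isLt⟩)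

/-- `x_m^U = min (x_{m+1}, q_{k′})`. -/
noncomputable def xUp (n c : ℕ) (q : Fin (c + 1) → ℝ) (x : Fin n → ℝ) (m : Fin n) : ℝ :=
  min (xNext n c q x m) (q (kPrime n c q x m))

lemma sign_div_sq_lt {s t : ℝ} (hst : s < t) (h : 0 < s ∨ t < 0) :
    Real.sign t / t ^ 2 < Real.sign s / s ^ 2 := by
  rcases h with hs | ht
  · have ht : 0 < t := hs.trans hst
    rw [Real.sign_of_pos hs, Real.sign_of_pos ht]
    rw [div_lt_div_iff₀ (by positivity) (by positivity)]
    nlinarith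
  · have hs : s < 0 := hst.trans ht
    rw [Real.sign_of_neg hs, Real.sign_of_neg ht]
    rw [div_lt_div_iff₀ (by nlinarith) (by nlinarith)]
    nlinarith

/-- For `x ∈ 𝒮(ν)` and a fixed particle `k`, the map
`y ↦ f_k(x₁,…,x_{k−1},y,x_{k+1},…,xₙ,u)` is strictly decreasing on `(x_k^L, x_k^U)`. -/
theorem stmt8 (n c : ℕ) (hn : 1 ≤ n) (hc : 1 ≤ c)
    (q : Fin (c + 1) → ℝ) (hq : StrictMono q)
    (u : Fin (c + 1) → ℝ) (hu : ∀ j, 0 < u j)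
    (ν : Fin c → ℕ) (hν : ∑ k, ν k = n)
    (x : Fin n → ℝ) (hx : x ∈ roa n c q ν) (k : Fin n) :
    StrictAntiOn (fun y : ℝ => force n c q u (Function.update x k y) k)
      (Set.Ioo (xLow n c q x k) (xUp n c q x k)) := by
  intro y₁ h₁ y₂ h₂ h12
  -- basic facts from membership in the state space
  obtain ⟨⟨hmono, hbnd⟩, -⟩ := hx
  have hxmono : ∀ i j : Fin n, i ≤ j → x i ≤ x j := by
    intro i j hij
    rcases eq_or_lt_of_le hij with h | h
    · rw [h]
    · exact (hmono i j h).le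
  -- the filter defining kPrime is nonempty
  set F := Finset.univ.filter fun j : Fin (c + 1) => x k < q j with hF
  have hlast : Fin.last c ∈ F := by
    simp [hF, (hbnd k).2]
  have hFne : F.Nonempty := ⟨_, hlast⟩
  have hKdef : kPrime n c q x k = F.min' hFne := by
    rw [kPrime, dif_pos hFne]
  set K := kPrime n c q x k with hK
  have hKmem : K ∈ F := hKdef ▸ F.min'_mem hFne
  have hxkK : x k < q K := by
    have := Finset.mem_filter.mp hKmem
    exact this.2
  have hKpos : 0 < (K : ℕ) := by
    by_contra h
    push_neg at h
    have hK0 : K = 0 := by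
      ext; simp only [Fin.val_zero]; omega
    have := (hbnd k).1
    rw [hK0] at hxkK
    linarith
  -- every electrode lies outside the interval
  have hqa : ∀ j : Fin (c + 1),
      q j ≤ xLow n c q x k ∨ xUp n c q x k ≤ q j := by
    intro j
    by_cases hj : x k < q j
    · right
      have hKj : K ≤ j := by
        rw [hKdef]
        exact F.min'_le j (by simp [hF, hj])
      calc xUp n c q x k ≤ q K := min_le_right _ _
        _ ≤ q j := hq.monotone hKj
    · left
      push_neg at hj
      have hjK : (j : ℕ) < (K : ℕ) := by
        by_contra hcon
        push_neg at hcon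
        have : q K ≤ q j := hq.monotone hcon
        linarith
      have hle : q j ≤ q ⟨(K : ℕ) - 1,
          lt_of_le_of_lt (Nat.sub_le _ _) K.isLt⟩ := by
        apply hq.monotone
        show (j : ℕ) ≤ (K : ℕ) - 1
        omega
      exact hle.trans (le_max_right _ _)
  -- every other particle lies outside the interval
  have hxa : ∀ j : Fin n, j ≠ k →
      x j ≤ xLow n c q x k ∨ xUp n c q x k ≤ x j := by
    intro j hjk
    rcases hjk.lt_or_gt with h | h
    · left
      have hkpos : 0 < (k : ℕ) := lt_of_le_of_lt (Nat.zero_le _) h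
      have hxp : xPrev n c q x k
          = x ⟨(k : ℕ) - 1, lt_of_le_of_lt (Nat.sub_le _ _) k.isLt⟩ := by
        rw [xPrev, dif_pos hkpos]
      have : x j ≤ x ⟨(k : ℕ) - 1, lt_of_le_of_lt (Nat.sub_le _ _) k.isLt⟩ := by
        apply hxmono
        show (j : ℕ) ≤ (k : ℕ) - 1
        omega
      calc x j ≤ xPrev n c q x k := by rw [hxp]; exact this
        _ ≤ xLow n c q x k := le_max_left _ _
    · right
      have hkn : (k : ℕ) + 1 < n := lt_of_le_of_lt h j.isLt
      have hxn : xNext n c q x k = x ⟨(k : ℕ) + 1, hkn⟩ := by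
        rw [xNext, dif_pos hkn]
      have : x ⟨(k : ℕ) + 1, hkn⟩ ≤ x j := by
        apply hxmono
        show (k : ℕ) + 1 ≤ (j : ℕ)
        omega
      calc xUp n c q x k ≤ xNext n c q x k := min_le_left _ _
        _ ≤ x j := by rw [hxn]; exact this
  -- key pointwise strict inequality
  have key : ∀ a : ℝ,
      (a ≤ xLow n c q x k ∨ xUp n c q x k ≤ a) →
      Real.sign (y₂ - a) / (y₂ - a) ^ 2 <
        Real.sign (y₁ - a) / (y₁ - a) ^ 2 := by
    intro a ha
    apply sign_div_sq_lt (by linarith)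
    rcases ha with h | h
    · left; have := h₁.1; linarith
    · right; have := h₂.2; linarith
  -- conclude
  simp only [force, Function.update_self]
  have hne : (j : Fin n) → j ∈ Finset.univ \ {k} → j ≠ k := by
    intro j hj
    simpa using (Finset.mem_sdiff.mp hj).2
  apply add_lt_add_of_le_of_lt
  · apply Finset.sum_le_sum
    intro j hj
    rw [Function.update_of_ne (hne j hj), Function.update_of_ne (hne j hj)]
    exact (key (x j) (hxa j (hne j hj))).le
  · apply Finset.sum_lt_sum_of_nonempty Finset.univ_nonempty
    intro j _
    rw [mul_div_assoc, mul_div_assoc]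
    exact mul_lt_mul_of_pos_left (key (q j) (hqa j)) (hu j)
end

section
/- Let u = (u_0,…,u_c) have all components strictly positive, let x ∈ 𝒮(ν), and fix k ∈ {1,…,n}. With all coordinates of x other than x_k held fixed, the function y ↦ f_k(x_1,…,x_{k−1},y,x_{k+1},…,x_n,u) tends to +∞ as y → x_k^L from the right and tends to −∞ as y → x_k^U from the left. -/
open Finset Filter Topology

/-! ### Auxiliary lemmas -/

/-- The basic singular function `y ↦ ((y - a) * |y - a|)⁻¹`, equal to
`sign (y - a) / (y - a) ^ 2`. -/
noncomputable def gfun (a y : ℝ) : ℝ := ((y - a) * |y - a|)⁻¹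

lemma sign_div_sq (z : ℝ) : Real.sign z / z ^ 2 = (z * |z|)⁻¹ := by
  rcases lt_trichotomy z 0 with h | h | h
  · rw [Real.sign_of_neg h, abs_of_neg h, mul_neg, ← sq, inv_neg, neg_div, one_div]
  · subst h; simp
  · rw [Real.sign_of_pos h, abs_of_pos h, ← sq, one_div]

lemma gfun_continuousAt {a L : ℝ} (h : a ≠ L) : ContinuousAt (gfun a) L := by
  have hne : L - a ≠ 0 := sub_ne_zero.mpr (Ne.symm h)
  exact ContinuousAt.inv₀
    (((continuousAt_id.sub continuousAt_const)).mul
      ((continuousAt_id.sub continuousAt_const).abs))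
    (mul_ne_zero hne (abs_ne_zero.mpr hne))

lemma gfun_tendsto_atTop (a : ℝ) : Tendsto (gfun a) (𝓝[>] a) atTop := by
  have h1 : Tendsto (fun y : ℝ => (y - a) * |y - a|) (𝓝[>] a) (𝓝[>] 0) := by
    apply tendsto_nhdsWithin_of_tendsto_nhds_of_eventually_within
    · have : Tendsto (fun y : ℝ => (y - a) * |y - a|) (𝓝 a) (𝓝 ((a - a) * |a - a|)) :=
        (((continuous_id.sub continuous_const)).mul
          ((continuous_id.sub continuous_const).abs)).tendsto a
      simpa using this.mono_left nhdsWithin_le_nhds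
    · filter_upwards [self_mem_nhdsWithin] with y hy
      have hpos : 0 < y - a := sub_pos.mpr hy
      exact mul_pos hpos (abs_pos.mpr hpos.ne')
  have := h1.inv_tendsto_nhdsGT_zero
  exact this.congr fun y => rfl

lemma gfun_tendsto_atBot (a : ℝ) : Tendsto (gfun a) (𝓝[<] a) atBot := by
  have h1 : Tendsto (fun y : ℝ => ((a - y) * |a - y|)⁻¹) (𝓝[<] a) atTop := by
    apply Filter.Tendsto.inv_tendsto_nhdsGT_zero
    apply tendsto_nhdsWithin_of_tendsto_nhds_of_eventually_within
    · have : Tendsto (fun y : ℝ => (a - y) * |a - y|) (𝓝 a) (𝓝 ((a - a) * |a - a|)) :=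
        (((continuous_const.sub continuous_id)).mul
          ((continuous_const.sub continuous_id).abs)).tendsto a
      simpa using this.mono_left nhdsWithin_le_nhds
    · filter_upwards [self_mem_nhdsWithin] with y hy
      have hpos : 0 < a - y := sub_pos.mpr hy
      exact mul_pos hpos (abs_pos.mpr hpos.ne')
  have h2 := tendsto_neg_atTop_atBot.comp h1
  refine h2.congr fun y => ?_
  show -((a - y) * |a - y|)⁻¹ = gfun a y
  have hay : a - y = -(y - a) := by ring
  rw [hay, abs_neg, neg_mul, inv_neg, neg_neg]
  rfl

lemma gsum_tendsto_nhds {ι : Type*} (s : Finset ι) (a cf : ι → ℝ) (L : ℝ)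
    (ha : ∀ j ∈ s, a j ≠ L) :
    Tendsto (fun y => ∑ j ∈ s, cf j * gfun (a j) y) (𝓝 L)
      (𝓝 (∑ j ∈ s, cf j * gfun (a j) L)) := by
  apply tendsto_finset_sum
  intro j hj
  exact Tendsto.const_mul _ ((gfun_continuousAt (ha j hj)).tendsto)

lemma gsum_tendsto_atTop {ι : Type*} [DecidableEq ι] (s : Finset ι) (a cf : ι → ℝ) (L : ℝ)
    (hc : ∀ j ∈ s, 0 < cf j) (j0 : ι) (hj0 : j0 ∈ s) (ha0 : a j0 = L)
    (ha : ∀ j ∈ s, j ≠ j0 → a j ≠ L) :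
    Tendsto (fun y => ∑ j ∈ s, cf j * gfun (a j) y) (𝓝[>] L) atTop := by
  have heq : (fun y => ∑ j ∈ s, cf j * gfun (a j) y)
      = fun y => cf j0 * gfun (a j0) y + ∑ j ∈ s.erase j0, cf j * gfun (a j) y :=
    funext fun y => (Finset.add_sum_erase s _ hj0).symm
  rw [heq]
  have h1 : Tendsto (gfun (a j0)) (𝓝[>] L) atTop := by rw [ha0]; exact gfun_tendsto_atTop L
  exact Filter.Tendsto.atTop_add (Tendsto.const_mul_atTop (hc j0 hj0) h1)
    ((gsum_tendsto_nhds _ _ _ _ fun j hj =>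
      ha j (Finset.mem_of_mem_erase hj) (Finset.ne_of_mem_erase hj)).mono_left
      nhdsWithin_le_nhds)

lemma gsum_tendsto_atBot {ι : Type*} [DecidableEq ι] (s : Finset ι) (a cf : ι → ℝ) (L : ℝ)
    (hc : ∀ j ∈ s, 0 < cf j) (j0 : ι) (hj0 : j0 ∈ s) (ha0 : a j0 = L)
    (ha : ∀ j ∈ s, j ≠ j0 → a j ≠ L) :
    Tendsto (fun y => ∑ j ∈ s, cf j * gfun (a j) y) (𝓝[<] L) atBot := by
  have heq : (fun y => ∑ j ∈ s, cf j * gfun (a j) y)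
      = fun y => cf j0 * gfun (a j0) y + ∑ j ∈ s.erase j0, cf j * gfun (a j) y :=
    funext fun y => (Finset.add_sum_erase s _ hj0).symm
  rw [heq]
  have h1 : Tendsto (gfun (a j0)) (𝓝[<] L) atBot := by rw [ha0]; exact gfun_tendsto_atBot L
  exact Filter.Tendsto.atBot_add (Tendsto.const_mul_atBot (hc j0 hj0) h1)
    ((gsum_tendsto_nhds _ _ _ _ fun j hj =>
      ha j (Finset.mem_of_mem_erase hj) (Finset.ne_of_mem_erase hj)).mono_left
      nhdsWithin_le_nhds)

/-- Every coordinate of a point of `𝒮(ν)` lies strictly between two consecutive electrodes. -/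
lemma roa_block (n c : ℕ) (q : Fin (c + 1) → ℝ) (ν : Fin c → ℕ) (hν : ∑ k, ν k = n)
    (x : Fin n → ℝ) (hx : x ∈ roa n c q ν) (m : Fin n) :
    ∃ t : Fin c, q t.castSucc < x m ∧ x m < q t.succ := by
  classical
  set P : ℕ → ℕ := fun t => ∑ j ∈ Finset.univ.filter (fun j : Fin c => (j : ℕ) < t), ν j with hP
  have hP0 : P 0 = 0 := by simp [P]
  have hPc : P c = n := by
    rw [← hν]
    apply Finset.sum_congr _ fun _ _ => rfl
    ext j; simp [j.isLt]
  have hex : ∃ t, (m : ℕ) < P t := ⟨c, hPc ▸ m.isLt⟩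
  set t0 := Nat.find hex with ht0
  have hupp : (m : ℕ) < P t0 := Nat.find_spec hex
  have ht0pos : 0 < t0 := by
    rcases Nat.eq_zero_or_pos t0 with h | h
    · rw [h, hP0] at hupp; omega
    · exact h
  have ht0le : t0 ≤ c := Nat.find_le (hPc ▸ m.isLt)
  have htc : t0 - 1 < c := by omega
  have hlow : P (t0 - 1) ≤ (m : ℕ) :=
    Nat.not_lt.mp (Nat.find_min hex (show t0 - 1 < t0 by omega))
  have hIio : (∑ j ∈ Finset.Iio (⟨t0 - 1, htc⟩ : Fin c), ν j) = P (t0 - 1) := by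
    apply Finset.sum_congr _ fun _ _ => rfl
    ext j; simp [Finset.mem_Iio, Fin.lt_def]
  have hstep : P t0 = P (t0 - 1) + ν ⟨t0 - 1, htc⟩ := by
    have hins : Finset.univ.filter (fun j : Fin c => (j : ℕ) < t0)
        = insert (⟨t0 - 1, htc⟩ : Fin c)
            (Finset.univ.filter (fun j : Fin c => (j : ℕ) < t0 - 1)) := by
      ext j
      simp only [Finset.mem_filter, Finset.mem_univ, true_and, Finset.mem_insert, Fin.ext_iff]
      omega
    have hnm : (⟨t0 - 1, htc⟩ : Fin c) ∉
        Finset.univ.filter (fun j : Fin c => (j : ℕ) < t0 - 1) := by simp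
    simp only [P, hins, Finset.sum_insert hnm]
    ring
  refine ⟨⟨t0 - 1, htc⟩, hx.2 ⟨t0 - 1, htc⟩ m ?_ ?_⟩
  · rw [hIio]; exact hlow
  · rw [hIio, ← hstep]; exact hupp

/-- No coordinate of a point of `𝒮(ν)` coincides with an electrode position. -/
lemma roa_ne_electrode (n c : ℕ) (q : Fin (c + 1) → ℝ) (hq : StrictMono q)
    (ν : Fin c → ℕ) (hν : ∑ k, ν k = n)
    (x : Fin n → ℝ) (hx : x ∈ roa n c q ν) (m : Fin n) (j : Fin (c + 1)) :
    x m ≠ q j := by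
  obtain ⟨t, h1, h2⟩ := roa_block n c q ν hν x hx m
  rcases le_or_gt (j : ℕ) (t : ℕ) with h | h
  · have : q j ≤ q t.castSucc := hq.monotone (by simpa [Fin.le_def] using h)
    exact (lt_of_le_of_lt this h1).ne'
  · have : q t.succ ≤ q j := hq.monotone (by simp only [Fin.le_def, Fin.val_succ]; omega)
    exact (h2.trans_le this).ne

lemma kPrime_spec (n c : ℕ) (q : Fin (c + 1) → ℝ) (x : Fin n → ℝ) (m : Fin n)
    (h0 : q 0 < x m) (hlast : x m < q (Fin.last c)) :
    x m < q (kPrime n c q x m) ∧ 0 < (kPrime n c q x m : ℕ) ∧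
      ∀ j : Fin (c + 1), (j : ℕ) < (kPrime n c q x m : ℕ) → q j ≤ x m := by
  classical
  have hne : (Finset.univ.filter fun j : Fin (c + 1) => x m < q j).Nonempty :=
    ⟨Fin.last c, by simp [hlast]⟩
  have hkP : kPrime n c q x m = (Finset.univ.filter fun j : Fin (c + 1) => x m < q j).min' hne := by
    unfold kPrime
    rw [dif_pos hne]
  have hmem := Finset.min'_mem _ hne
  rw [← hkP] at hmem
  have hless : x m < q (kPrime n c q x m) := by
    simpa using (Finset.mem_filter.mp hmem).2
  refine ⟨hless, ?_, ?_⟩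
  · by_contra h
    have hk0 : kPrime n c q x m = 0 := by
      apply Fin.ext
      simp only [Fin.val_zero]
      omega
    rw [hk0] at hless
    exact absurd hless (not_lt.mpr h0.le)
  · intro j hj
    by_contra hcon
    push_neg at hcon
    have hjm : j ∈ Finset.univ.filter fun j : Fin (c + 1) => x m < q j := by
      simp [hcon]
    have := Finset.min'_le _ _ hjm
    rw [← hkP] at this
    exact absurd hj (not_lt.mpr this)

/-- For `x ∈ 𝒮(ν)` and a fixed particle `k`, the map
`y ↦ f_k(x₁,…,x_{k−1},y,x_{k+1},…,xₙ,u)` tends to `+∞` as `y → x_k^L⁺` and to `-∞` as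
`y → x_k^U⁻`. -/
theorem stmt9 (n c : ℕ) (hn : 1 ≤ n) (hc : 1 ≤ c)
    (q : Fin (c + 1) → ℝ) (hq : StrictMono q)
    (u : Fin (c + 1) → ℝ) (hu : ∀ j, 0 < u j)
    (ν : Fin c → ℕ) (hν : ∑ k, ν k = n)
    (x : Fin n → ℝ) (hx : x ∈ roa n c q ν) (k : Fin n) :
    Tendsto (fun y : ℝ => force n c q u (Function.update x k y) k)
      (𝓝[>] (xLow n c q x k)) atTop ∧
    Tendsto (fun y : ℝ => force n c q u (Function.update x k y) k)
      (𝓝[<] (xUp n c q x k)) atBot := by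
  classical
  have hsm : StrictMono x := fun i j h => hx.1.1 i j h
  have hxq : ∀ (m : Fin n) (j : Fin (c + 1)), x m ≠ q j :=
    roa_ne_electrode n c q hq ν hν x hx
  obtain ⟨hk'lt, hk'pos, hk'min⟩ :=
    kPrime_spec n c q x k (hx.1.2 k).1 (hx.1.2 k).2
  -- rewrite the force in terms of `gfun`
  have hfeq : ∀ y : ℝ, force n c q u (Function.update x k y) k
      = (∑ j ∈ Finset.univ \ {k}, (1 : ℝ) * gfun (x j) y)
        + ∑ j : Fin (c + 1), u j * gfun (q j) y := by
    intro y
    unfold force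
    congr 1
    · apply Finset.sum_congr rfl
      intro j hj
      have hjk : j ≠ k := by simpa using (Finset.mem_sdiff.mp hj).2
      rw [Function.update_self, Function.update_of_ne hjk, one_mul]
      exact sign_div_sq (y - x j)
    · apply Finset.sum_congr rfl
      intro j _
      rw [Function.update_self, mul_div_assoc, sign_div_sq]
      rfl
  simp only [hfeq]
  set K1 : Fin (c + 1) :=
    ⟨((kPrime n c q x k : ℕ)) - 1,
      lt_of_le_of_lt (Nat.sub_le _ _) (kPrime n c q x k).isLt⟩ with hK1
  constructor
  · -- limit at `xLow` from the right
    rcases le_or_gt (xPrev n c q x k) (q K1) with hcase | hcase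
    · -- the binding singularity is the electrode `K1`
      have hL : xLow n c q x k = q K1 := max_eq_right hcase
      rw [hL]
      exact Filter.Tendsto.add_atTop
        ((gsum_tendsto_nhds _ _ _ _ fun j _ => hxq j K1).mono_left nhdsWithin_le_nhds)
        (gsum_tendsto_atTop Finset.univ q u (q K1) (fun j _ => hu j) K1
          (Finset.mem_univ _) rfl (fun j _ hj hEq => hj (hq.injective hEq)))
    · -- the binding singularity is the particle `k - 1`
      have hkpos : 0 < (k : ℕ) := by
        by_contra h
        have : xPrev n c q x k = q 0 := by unfold xPrev; rw [dif_neg (by omega)]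
        rw [this] at hcase
        exact absurd hcase (not_lt.mpr (hq.monotone (Fin.zero_le K1)))
      set km : Fin n := ⟨(k : ℕ) - 1, lt_of_le_of_lt (Nat.sub_le _ _) k.isLt⟩ with hkm
      have hprev : xPrev n c q x k = x km := by unfold xPrev; rw [dif_pos hkpos]
      have hL : xLow n c q x k = x km := by
        unfold xLow
        rw [max_eq_left (hprev ▸ hcase.le), hprev]
      rw [hL]
      refine Filter.Tendsto.atTop_add
        (gsum_tendsto_atTop (Finset.univ \ {k}) x (fun _ => (1 : ℝ)) (x km)
          (fun _ _ => one_pos) km ?_ rfl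
          (fun j _ hj hEq => hj (hsm.injective hEq)))
        ((gsum_tendsto_nhds _ _ _ _ fun j _ => (hxq km j).symm).mono_left
          nhdsWithin_le_nhds)
      rw [Finset.mem_sdiff]
      refine ⟨Finset.mem_univ _, ?_⟩
      simp only [Finset.mem_singleton]
      intro hEq
      have : (km : ℕ) = (k : ℕ) := congrArg Fin.val hEq
      simp only [hkm] at this
      omega
  · -- limit at `xUp` from the left
    rcases le_or_gt (q (kPrime n c q x k)) (xNext n c q x k) with hcase | hcase
    · -- the binding singularity is the electrode `kPrime`
      have hU : xUp n c q x k = q (kPrime n c q x k) := min_eq_right hcase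
      rw [hU]
      exact Filter.Tendsto.add_atBot
        ((gsum_tendsto_nhds _ _ _ _ fun j _ => hxq j (kPrime n c q x k)).mono_left
          nhdsWithin_le_nhds)
        (gsum_tendsto_atBot Finset.univ q u _ (fun j _ => hu j) (kPrime n c q x k)
          (Finset.mem_univ _) rfl (fun j _ hj hEq => hj (hq.injective hEq)))
    · -- the binding singularity is the particle `k + 1`
      have hklt : (k : ℕ) + 1 < n := by
        by_contra h
        have : xNext n c q x k = q (Fin.last c) := by unfold xNext; rw [dif_neg h]
        rw [this] at hcase
        exact absurd hcase (not_lt.mpr (hq.monotone (Fin.le_last _)))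
      set kp : Fin n := ⟨(k : ℕ) + 1, hklt⟩ with hkp
      have hnext : xNext n c q x k = x kp := by unfold xNext; rw [dif_pos hklt]
      have hU : xUp n c q x k = x kp := by
        unfold xUp
        rw [min_eq_left (hnext ▸ hcase.le), hnext]
      rw [hU]
      refine Filter.Tendsto.atBot_add
        (gsum_tendsto_atBot (Finset.univ \ {k}) x (fun _ => (1 : ℝ)) (x kp)
          (fun _ _ => one_pos) kp ?_ rfl
          (fun j _ hj hEq => hj (hsm.injective hEq)))
        ((gsum_tendsto_nhds _ _ _ _ fun j _ => (hxq kp j).symm).mono_left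
          nhdsWithin_le_nhds)
      rw [Finset.mem_sdiff]
      refine ⟨Finset.mem_univ _, ?_⟩
      simp only [Finset.mem_singleton]
      intro hEq
      have : (kp : ℕ) = (k : ℕ) := congrArg Fin.val hEq
      simp only [hkp] at this
      omega
end

section
/- Let u = (u_0,…,u_c) have all components strictly positive, let x ∈ 𝒮(ν), and fix k ∈ {1,…,n}. Then there exists exactly one y ∈ (x_k^L, x_k^U) satisfying f_k(x_1,…,x_{k−1},y,x_{k+1},…,x_n,u) = 0. -/
open Finset Filter Topology

lemma term_pos_shape {a L U y w : ℝ} (ha : a ≤ L) (hy : y ∈ Set.Ioo L U) :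
    w * Real.sign (y - a) / (y - a) ^ 2 = w / (y - a) ^ 2 := by
  rw [Real.sign_of_pos (by linarith [hy.1] : (0:ℝ) < y - a), mul_one]

lemma term_neg_shape {a L U y w : ℝ} (ha : U ≤ a) (hy : y ∈ Set.Ioo L U) :
    w * Real.sign (y - a) / (y - a) ^ 2 = -(w / (a - y) ^ 2) := by
  rw [Real.sign_of_neg (by linarith [hy.2] : y - a < 0)]
  have : (y - a)^2 = (a - y)^2 := by ring
  rw [this]; ring

/-- Near-L positivity half of the main lemma. -/
lemma nearL {ι : Type*} (s : Finset ι) (a w : ι → ℝ) (hw : ∀ i ∈ s, 0 < w i)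
    (L U : ℝ) (hLU : L < U) (ha : ∀ i ∈ s, a i ≤ L ∨ U ≤ a i)
    (hL : ∃ i ∈ s, a i = L) :
    ∃ y ∈ Set.Ioo L U, 0 < ∑ i ∈ s, w i * Real.sign (y - a i) / (y - a i) ^ 2 := by
  classical
  obtain ⟨i0, hi0s, hi0⟩ := hL
  have hwi0 : 0 < w i0 := hw i0 hi0s
  have hUL : (0:ℝ) < U - L := sub_pos.2 hLU
  set B : ℝ := (2 / (U - L)) ^ 2 with hB
  have hBpos : 0 < B := pow_pos (div_pos two_pos hUL) 2
  set M : ℝ := (∑ i ∈ s, w i) * B with hM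
  have hMnn : 0 ≤ M := mul_nonneg (Finset.sum_nonneg fun i hi => (hw i hi).le) hBpos.le
  set m : ℝ := (L + U) / 2 with hm
  have hLm : L < m := by simp only [hm]; linarith
  have hmU : m < U := by simp only [hm]; linarith
  set δ : ℝ := min ((m - L) / 2) (Real.sqrt (w i0 / (M + 1))) with hδ
  have hδpos : 0 < δ := lt_min (by linarith) (Real.sqrt_pos.2 (div_pos hwi0 (by linarith)))
  set y : ℝ := L + δ with hy
  have hym : y < m := by
    have : δ ≤ (m - L) / 2 := min_le_left _ _
    simp only [hy]; linarith
  have hyIoo : y ∈ Set.Ioo L U := ⟨by simp [hy, hδpos], by linarith⟩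
  refine ⟨y, hyIoo, ?_⟩
  have hbound : ∀ i ∈ s, i ≠ i0 → -(w i * B) ≤ w i * Real.sign (y - a i) / (y - a i) ^ 2 := by
    intro i hi _
    have hwi := hw i hi
    rcases ha i hi with h | h
    · rw [term_pos_shape h hyIoo]
      have hpos : (0:ℝ) < y - a i := by linarith [hyIoo.1]
      have : 0 < w i / (y - a i)^2 := by positivity
      nlinarith
    · rw [term_neg_shape h hyIoo]
      have h1 : U - m ≤ a i - y := by linarith
      have h2 : (0:ℝ) < U - m := by linarith
      have h3 : (U - m)^2 ≤ (a i - y)^2 := by nlinarith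
      have h4 : w i / (a i - y)^2 ≤ w i / (U - m)^2 :=
        div_le_div_of_nonneg_left hwi.le (by positivity) h3
      have h5 : w i / (U - m)^2 = w i * B := by
        rw [hB]
        have : U - m = (U - L)/2 := by simp only [hm]; ring
        rw [this]
        field_simp
      linarith
  have hi0term : M + 1 ≤ w i0 * Real.sign (y - a i0) / (y - a i0) ^ 2 := by
    rw [term_pos_shape (le_of_eq hi0) hyIoo, hi0]
    have hyL : y - L = δ := by simp [hy]
    rw [hyL]
    have hδle : δ ≤ Real.sqrt (w i0 / (M + 1)) := min_le_right _ _
    have hδsq : δ ^ 2 ≤ w i0 / (M + 1) := by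
      calc δ^2 ≤ Real.sqrt (w i0 / (M+1)) ^ 2 := by nlinarith
      _ = w i0 / (M+1) := Real.sq_sqrt (by positivity)
    rw [le_div_iff₀ (by positivity)]
    calc (M+1) * δ^2 ≤ (M+1) * (w i0 / (M+1)) := by
          apply mul_le_mul_of_nonneg_left hδsq (by linarith)
      _ = w i0 := by field_simp
  rw [← Finset.sum_erase_add s _ hi0s]
  have hrest : -(M) ≤ ∑ i ∈ s.erase i0, w i * Real.sign (y - a i) / (y - a i) ^ 2 := by
    have h1 : ∑ i ∈ s.erase i0, -(w i * B) ≤ ∑ i ∈ s.erase i0, w i * Real.sign (y - a i) / (y - a i) ^ 2 :=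
      Finset.sum_le_sum fun i hi => hbound i (Finset.mem_of_mem_erase hi) (Finset.ne_of_mem_erase hi)
    have h2 : -(M) ≤ ∑ i ∈ s.erase i0, -(w i * B) := by
      rw [Finset.sum_neg_distrib, ← Finset.sum_mul, hM, neg_le_neg_iff]
      apply mul_le_mul_of_nonneg_right _ hBpos.le
      exact Finset.sum_le_sum_of_subset_of_nonneg (Finset.erase_subset _ _)
        (fun i hi _ => (hw i hi).le)
    linarith
  linarith

lemma strictAntiSum {ι : Type*} (s : Finset ι) (a w : ι → ℝ) (hw : ∀ i ∈ s, 0 < w i)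
    (L U : ℝ) (ha : ∀ i ∈ s, a i ≤ L ∨ U ≤ a i) (hne : s.Nonempty) :
    StrictAntiOn (fun y => ∑ i ∈ s, w i * Real.sign (y - a i) / (y - a i) ^ 2) (Set.Ioo L U) := by
  intro y1 hy1 y2 hy2 h12
  apply Finset.sum_lt_sum_of_nonempty hne
  intro i hi
  have hwi := hw i hi
  rcases ha i hi with h | h
  · rw [term_pos_shape h hy1, term_pos_shape h hy2]
    apply div_lt_div_of_pos_left hwi
    · have : (0:ℝ) < y1 - a i := by linarith [hy1.1]
      positivity
    · have h1 : (0:ℝ) < y1 - a i := by linarith [hy1.1]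
      nlinarith
  · rw [term_neg_shape h hy1, term_neg_shape h hy2]
    have h1 : (0:ℝ) < a i - y2 := by linarith [hy2.2]
    have : w i / (a i - y1)^2 < w i / (a i - y2)^2 := by
      apply div_lt_div_of_pos_left hwi
      · positivity
      · nlinarith
    linarith

lemma contSum {ι : Type*} (s : Finset ι) (a w : ι → ℝ)
    (L U : ℝ) (ha : ∀ i ∈ s, a i ≤ L ∨ U ≤ a i) :
    ContinuousOn (fun y => ∑ i ∈ s, w i * Real.sign (y - a i) / (y - a i) ^ 2) (Set.Ioo L U) := by
  apply continuousOn_finset_sum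
  intro i hi
  rcases ha i hi with h | h
  · apply ContinuousOn.congr (f := fun y => w i / (y - a i)^2)
    · apply ContinuousOn.div continuousOn_const (by fun_prop)
      intro y hy
      have : (0:ℝ) < y - a i := by linarith [hy.1]
      positivity
    · intro y hy; exact term_pos_shape h hy
  · apply ContinuousOn.congr (f := fun y => -(w i / (a i - y)^2))
    · apply ContinuousOn.neg
      apply ContinuousOn.div continuousOn_const (by fun_prop)
      intro y hy
      have : (0:ℝ) < a i - y := by linarith [hy.2]
      positivity
    · intro y hy; exact term_neg_shape h hy

lemma mainLemma {ι : Type*} (s : Finset ι) (a w : ι → ℝ) (hw : ∀ i ∈ s, 0 < w i)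
    (L U : ℝ) (hLU : L < U) (ha : ∀ i ∈ s, a i ≤ L ∨ U ≤ a i)
    (hL : ∃ i ∈ s, a i = L) (hU : ∃ i ∈ s, a i = U) :
    ∃! y : ℝ, y ∈ Set.Ioo L U ∧ ∑ i ∈ s, w i * Real.sign (y - a i) / (y - a i) ^ 2 = 0 := by
  set g : ℝ → ℝ := fun y => ∑ i ∈ s, w i * Real.sign (y - a i) / (y - a i) ^ 2 with hg
  obtain ⟨y1, hy1, hgy1⟩ := nearL s a w hw L U hLU ha hL
  have hgy1' : 0 < g y1 := hgy1
  -- reflection to get a negative value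
  obtain ⟨z, hz, hgz⟩ := nearL s (fun i => -(a i)) w hw (-U) (-L) (by linarith)
    (fun i hi => by
      rcases ha i hi with h | h
      · exact Or.inr (by show -L ≤ -(a i); linarith)
      · exact Or.inl (by show -(a i) ≤ -U; linarith))
    (by obtain ⟨i, his, hi⟩ := hU; exact ⟨i, his, by show -(a i) = -U; rw [hi]⟩)
  have hy2 : -z ∈ Set.Ioo L U := ⟨by linarith [hz.2], by linarith [hz.1]⟩
  have hgy2 : g (-z) < 0 := by
    have heq : g (-z) = -(∑ i ∈ s, w i * Real.sign (z - -(a i)) / (z - -(a i)) ^ 2) := by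
      simp only [hg, ← Finset.sum_neg_distrib]
      apply Finset.sum_congr rfl
      intro i _
      have h1 : -z - a i = -(z - -(a i)) := by ring
      rw [h1, Real.sign_neg]
      have h2 : (-(z - -a i))^2 = (z - -a i)^2 := by ring
      rw [h2]; ring
    rw [heq]; linarith
  have hanti : StrictAntiOn g (Set.Ioo L U) :=
    strictAntiSum s a w hw L U ha (by obtain ⟨i, his, _⟩ := hL; exact ⟨i, his⟩)
  have hcont : ContinuousOn g (Set.Ioo L U) := contSum s a w L U ha
  have h12 : y1 < -z := by
    by_contra h
    push_neg at h
    rcases eq_or_lt_of_le h with h | h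
    · rw [← h] at hgy1'; linarith
    · have := hanti hy2 hy1 h; linarith
  have hicc : Set.Icc y1 (-z) ⊆ Set.Ioo L U := fun t ht =>
    ⟨lt_of_lt_of_le hy1.1 ht.1, lt_of_le_of_lt ht.2 hy2.2⟩
  have hivt : Set.Icc (g (-z)) (g y1) ⊆ g '' Set.Icc y1 (-z) :=
    intermediate_value_Icc' h12.le (hcont.mono hicc)
  obtain ⟨y0, hy0mem, hy0⟩ := hivt ⟨hgy2.le, hgy1'.le⟩
  refine ⟨y0, ⟨hicc hy0mem, hy0⟩, ?_⟩
  intro z' hz'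
  have hz2 : g z' = 0 := hz'.2
  exact hanti.injOn hz'.1 (hicc hy0mem) (hz2.trans hy0.symm)

lemma exists_gap {n c : ℕ} (hc : 1 ≤ c) (ν : Fin c → ℕ) (hν : ∑ k, ν k = n) (m : Fin n) :
    ∃ t : Fin c, (∑ j ∈ Finset.Iio t, ν j) ≤ (m : ℕ) ∧
      (m : ℕ) < (∑ j ∈ Finset.Iio t, ν j) + ν t := by
  classical
  set A : Finset (Fin c) := univ.filter (fun t => ∑ j ∈ Finset.Iio t, ν j ≤ (m : ℕ)) with hA
  have h0 : (⟨0, hc⟩ : Fin c) ∈ A := by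
    simp only [hA, mem_filter, mem_univ, true_and]
    have : Finset.Iio (⟨0, hc⟩ : Fin c) = ∅ := by
      ext j; simp [Fin.lt_def]
    simp [this]
  have hAne : A.Nonempty := ⟨_, h0⟩
  set t := A.max' hAne with ht
  have htA : t ∈ A := A.max'_mem hAne
  have ht1 : ∑ j ∈ Finset.Iio t, ν j ≤ (m : ℕ) := by
    simpa [hA] using htA
  refine ⟨t, ht1, ?_⟩
  by_contra h
  push_neg at h
  by_cases hcase : (t : ℕ) + 1 < c
  · have hmem : (⟨(t:ℕ)+1, hcase⟩ : Fin c) ∈ A := by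
      simp only [hA, mem_filter, mem_univ, true_and]
      have heq : Finset.Iio (⟨(t:ℕ)+1, hcase⟩ : Fin c)
          = insert (⟨(t:ℕ), t.isLt⟩ : Fin c) (Finset.Iio ⟨(t:ℕ), t.isLt⟩) := by
        ext j; simp only [Finset.mem_insert, Finset.mem_Iio, Fin.lt_def, Fin.ext_iff, Fin.val_mk]
        omega
      rw [heq, Finset.sum_insert (by simp [Fin.lt_def])]
      have : (⟨(t:ℕ), t.isLt⟩ : Fin c) = t := rfl
      rw [this]
      omega
    have := A.le_max' _ hmem
    rw [← ht] at this
    simp only [Fin.le_def, Fin.val_mk] at this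
    omega
  · have hlast : (t : ℕ) + 1 = c := by omega
    have huniv : (Finset.univ : Finset (Fin c)) = insert t (Finset.Iio t) := by
      ext j
      simp only [Finset.mem_insert, Finset.mem_Iio, Fin.lt_def, Finset.mem_univ, true_iff]
      by_cases hj : j = t
      · left; exact hj
      · right
        have := j.isLt
        have : (j:ℕ) ≠ (t:ℕ) := fun hh => hj (Fin.ext hh)
        omega
    have : n = ∑ j ∈ Finset.Iio t, ν j + ν t := by
      rw [← hν, huniv, Finset.sum_insert (by simp [Fin.lt_def])]; ring
    have := m.isLt
    omega

/-- For `x ∈ 𝒮(ν)` and a fixed particle `k`, there is exactly one `y ∈ (x_k^L, x_k^U)`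
with `f_k(x₁,…,x_{k−1},y,x_{k+1},…,xₙ,u) = 0`. -/
theorem stmt10 (n c : ℕ) (hn : 1 ≤ n) (hc : 1 ≤ c)
    (q : Fin (c + 1) → ℝ) (hq : StrictMono q)
    (u : Fin (c + 1) → ℝ) (hu : ∀ j, 0 < u j)
    (ν : Fin c → ℕ) (hν : ∑ k, ν k = n)
    (x : Fin n → ℝ) (hx : x ∈ roa n c q ν) (k : Fin n) :
    ∃! y : ℝ, y ∈ Set.Ioo (xLow n c q x k) (xUp n c q x k) ∧
      force n c q u (Function.update x k y) k = 0 := by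
  classical
  obtain ⟨⟨hmono, hrange⟩, hroa⟩ := hx
  have hsm : StrictMono x := fun i j h => hmono i j h
  -- gap membership
  obtain ⟨t, ht1, ht2⟩ := exists_gap hc ν hν k
  obtain ⟨hgap1, hgap2⟩ := hroa t k ht1 ht2
  -- x k differs from all electrodes
  have hne_q : ∀ j : Fin (c+1), x k ≠ q j := by
    intro j
    rcases le_or_gt j t.castSucc with h | h
    · intro he; have := hq.monotone h; rw [← he] at this; linarith
    · have hj : t.succ ≤ j := Fin.castSucc_lt_iff_succ_le.mp h
      intro he; have := hq.monotone hj; rw [← he] at this; linarith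
  -- kPrime facts
  have hfne : (Finset.univ.filter fun j : Fin (c+1) => x k < q j).Nonempty :=
    ⟨Fin.last c, by simp [(hrange k).2]⟩
  have hKdef : kPrime n c q x k
      = (Finset.univ.filter fun j : Fin (c+1) => x k < q j).min' hfne := by
    rw [kPrime, dif_pos hfne]
  set K := kPrime n c q x k with hK
  have hxK : x k < q K := by
    have := Finset.min'_mem _ hfne
    rw [← hKdef] at this
    exact (Finset.mem_filter.mp this).2
  have hlow : ∀ j : Fin (c+1), j < K → q j ≤ x k := by
    intro j hj
    by_contra hcon
    push_neg at hcon
    have hmem : j ∈ (Finset.univ.filter fun j : Fin (c+1) => x k < q j) := by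
      simp [hcon]
    have := Finset.min'_le _ _ hmem
    rw [← hKdef] at this
    exact absurd hj (not_lt.2 this)
  have hK0 : 0 < (K : ℕ) := by
    by_contra h
    push_neg at h
    have hK0' : K = ⟨0, Nat.succ_pos c⟩ := Fin.ext (by simp only [Fin.val_mk]; omega)
    have h1 := (hrange k).1
    rw [hK0'] at hxK
    have : q 0 = q (⟨0, Nat.succ_pos c⟩ : Fin (c+1)) := rfl
    rw [← this] at hxK
    linarith
  set Km : Fin (c+1) := ⟨(K : ℕ) - 1, lt_of_le_of_lt (Nat.sub_le _ _) K.isLt⟩ with hKm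
  have hKmlt : Km < K := by
    simp only [Fin.lt_def, hKm, Fin.val_mk]; omega
  have hqKm : q Km < x k :=
    lt_of_le_of_ne (hlow Km hKmlt) (hne_q Km).symm
  -- xPrev / xNext facts
  have hPrev : xPrev n c q x k < x k := by
    rw [xPrev]
    split_ifs with h
    · exact hsm (show (⟨(k:ℕ)-1, _⟩ : Fin n) < k by
        simp only [Fin.lt_def, Fin.val_mk]; omega)
    · exact (hrange k).1
  have hNext : x k < xNext n c q x k := by
    rw [xNext]
    split_ifs with h
    · exact hsm (show k < (⟨(k:ℕ)+1, h⟩ : Fin n) by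
        simp only [Fin.lt_def, Fin.val_mk]; omega)
    · exact (hrange k).2
  have hLeq : xLow n c q x k = max (xPrev n c q x k) (q Km) := rfl
  have hUeq : xUp n c q x k = min (xNext n c q x k) (q K) := rfl
  set L := xLow n c q x k with hL
  set U := xUp n c q x k with hU
  have hLx : L < x k := by
    rw [hLeq, max_lt_iff]; exact ⟨hPrev, hqKm⟩
  have hxU : x k < U := by
    rw [hUeq, lt_min_iff]; exact ⟨hNext, hxK⟩
  have hLU : L < U := hLx.trans hxU
  -- particles below / above
  have hbelow : ∀ j : Fin n, j < k → x j ≤ L := by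
    intro j hj
    have hk0 : 0 < (k : ℕ) := by
      simp only [Fin.lt_def] at hj; omega
    have hPe : xPrev n c q x k = x ⟨(k:ℕ)-1, lt_of_le_of_lt (Nat.sub_le _ _) k.isLt⟩ := by
      rw [xPrev, dif_pos hk0]
    have hle : x j ≤ x ⟨(k:ℕ)-1, lt_of_le_of_lt (Nat.sub_le _ _) k.isLt⟩ := by
      apply hsm.monotone
      simp only [Fin.le_def, Fin.val_mk]
      simp only [Fin.lt_def] at hj
      omega
    rw [hLeq]
    calc x j ≤ xPrev n c q x k := by rw [hPe]; exact hle
      _ ≤ max (xPrev n c q x k) (q Km) := le_max_left _ _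
  have habove : ∀ j : Fin n, k < j → U ≤ x j := by
    intro j hj
    have hk1 : (k : ℕ) + 1 < n := by
      have := j.isLt; simp only [Fin.lt_def] at hj; omega
    have hNe : xNext n c q x k = x ⟨(k:ℕ)+1, hk1⟩ := by
      rw [xNext, dif_pos hk1]
    have hle : x ⟨(k:ℕ)+1, hk1⟩ ≤ x j := by
      apply hsm.monotone
      simp only [Fin.le_def, Fin.val_mk]
      simp only [Fin.lt_def] at hj
      omega
    rw [hUeq]
    calc min (xNext n c q x k) (q K) ≤ xNext n c q x k := min_le_left _ _
      _ ≤ x j := by rw [hNe]; exact hle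
  -- electrodes below / above
  have heb : ∀ j : Fin (c+1), j < K → q j ≤ L := by
    intro j hj
    have : q j ≤ q Km := by
      apply hq.monotone
      simp only [Fin.le_def, hKm, Fin.val_mk]
      simp only [Fin.lt_def] at hj
      omega
    rw [hLeq]
    exact this.trans (le_max_right _ _)
  have hea : ∀ j : Fin (c+1), K ≤ j → U ≤ q j := by
    intro j hj
    have : q K ≤ q j := hq.monotone hj
    rw [hUeq]
    exact (min_le_right _ _).trans this
  -- set up mainLemma data
  set s : Finset (Sum (Fin n) (Fin (c+1))) :=
    (Finset.univ \ {k}).disjSum Finset.univ with hs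
  set av : Sum (Fin n) (Fin (c+1)) → ℝ := Sum.elim x q with hav
  set wv : Sum (Fin n) (Fin (c+1)) → ℝ := Sum.elim (fun _ => (1:ℝ)) u with hwv
  have hw : ∀ i ∈ s, 0 < wv i := by
    rintro (j | j) _
    · exact one_pos
    · exact hu j
  have haLU : ∀ i ∈ s, av i ≤ L ∨ U ≤ av i := by
    rintro (j | j) hi
    · have hjk : j ≠ k := by
        rw [hs, Finset.inl_mem_disjSum, Finset.mem_sdiff] at hi
        simpa using hi.2
      rcases hjk.lt_or_gt with h | h
      · exact Or.inl (hbelow j h)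
      · exact Or.inr (habove j h)
    · rcases lt_or_ge j K with h | h
      · exact Or.inl (heb j h)
      · exact Or.inr (hea j h)
  have hLmem : ∃ i ∈ s, av i = L := by
    rcases le_or_gt (q Km) (xPrev n c q x k) with h | h
    · have hLval : L = xPrev n c q x k := by rw [hLeq, max_eq_left h]
      by_cases hk0 : 0 < (k : ℕ)
      · refine ⟨Sum.inl ⟨(k:ℕ)-1, lt_of_le_of_lt (Nat.sub_le _ _) k.isLt⟩, ?_, ?_⟩
        · rw [hs, Finset.inl_mem_disjSum, Finset.mem_sdiff]
          refine ⟨Finset.mem_univ _, ?_⟩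
          simp only [Finset.mem_singleton]
          intro he
          have := congrArg Fin.val he
          simp only [Fin.val_mk] at this
          omega
        · show x _ = L
          rw [hLval, xPrev, dif_pos hk0]
      · refine ⟨Sum.inr ⟨0, Nat.succ_pos c⟩, ?_, ?_⟩
        · rw [hs, Finset.inr_mem_disjSum]; exact Finset.mem_univ _
        · show q _ = L
          rw [hLval, xPrev, dif_neg hk0]
          exact congrArg q (Fin.ext (by simp))
    · refine ⟨Sum.inr Km, ?_, ?_⟩
      · rw [hs, Finset.inr_mem_disjSum]; exact Finset.mem_univ _
      · show q Km = L
        rw [hLeq, max_eq_right h.le]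
  have hUmem : ∃ i ∈ s, av i = U := by
    rcases le_or_gt (xNext n c q x k) (q K) with h | h
    · have hUval : U = xNext n c q x k := by rw [hUeq, min_eq_left h]
      by_cases hk1 : (k:ℕ) + 1 < n
      · refine ⟨Sum.inl ⟨(k:ℕ)+1, hk1⟩, ?_, ?_⟩
        · rw [hs, Finset.inl_mem_disjSum, Finset.mem_sdiff]
          refine ⟨Finset.mem_univ _, ?_⟩
          simp only [Finset.mem_singleton]
          intro he
          have := congrArg Fin.val he
          simp only [Fin.val_mk] at this
          omega
        · show x _ = U
          rw [hUval, xNext, dif_pos hk1]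
      · refine ⟨Sum.inr (Fin.last c), ?_, ?_⟩
        · rw [hs, Finset.inr_mem_disjSum]; exact Finset.mem_univ _
        · show q (Fin.last c) = U
          rw [hUval, xNext, dif_neg hk1]
    · refine ⟨Sum.inr K, ?_, ?_⟩
      · rw [hs, Finset.inr_mem_disjSum]; exact Finset.mem_univ _
      · show q K = U
        rw [hUeq, min_eq_right h.le]
  -- rewrite force as the sum over the disjoint union
  have hforce : ∀ y : ℝ, force n c q u (Function.update x k y) k
      = ∑ i ∈ s, wv i * Real.sign (y - av i) / (y - av i) ^ 2 := by
    intro y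
    rw [hs, Finset.sum_disjSum, force]
    congr 1
    · apply Finset.sum_congr rfl
      intro j hj
      have hjk : j ≠ k := by
        rw [Finset.mem_sdiff] at hj
        simpa using hj.2
      simp only [hwv, hav, Sum.elim_inl, Sum.elim_inr, Function.update_self,
        Function.update_of_ne hjk, one_mul]
    · apply Finset.sum_congr rfl
      intro j _
      simp only [hwv, hav, Sum.elim_inl, Sum.elim_inr, Function.update_self]
  obtain ⟨y, ⟨hy1, hy2⟩, hyu⟩ := mainLemma s av wv hw L U hLU haLU hLmem hUmem
  refine ⟨y, ⟨hy1, by rw [hforce]; exact hy2⟩, ?_⟩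
  intro z hz
  exact hyu z ⟨hz.1, by rw [← hforce]; exact hz.2⟩
end

section
/- Let u = (u_0,…,u_c) have all components strictly positive and let ν ∈ ℕ₀^c satisfy ν_1 + ⋯ + ν_c = n. Define g : 𝒮(ν) → ℝ^n componentwise by letting g_k(x) be the unique y ∈ (x_k^L, x_k^U) with f_k(x_1,…,x_{k−1},y,x_{k+1},…,x_n,u) = 0. Then g maps 𝒮(ν) into 𝒮(ν), and for all x, y ∈ 𝒮(ν) with x ≠ y one has ‖g(x) − g(y)‖_∞ < ‖x − y‖_∞; in particular g has at most one fixed point in 𝒮(ν). -/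
open Finset Filter Topology

section Aux
noncomputable def phi (t : ℝ) : ℝ := Real.sign t / t ^ 2

lemma sq_pos' {t : ℝ} (h : t ≠ 0) : (0:ℝ) < t ^ 2 := by positivity

lemma phi_pos {t : ℝ} (h : 0 < t) : 0 < phi t := by
  unfold phi; rw [Real.sign_of_pos h]; exact div_pos one_pos (sq_pos' h.ne')

lemma phi_neg {t : ℝ} (h : t < 0) : phi t < 0 := by
  unfold phi; rw [Real.sign_of_neg h]
  exact div_neg_of_neg_of_pos (by norm_num) (sq_pos' h.ne)

lemma phi_le_pos {s t : ℝ} (hs : 0 < s) (hst : s ≤ t) : phi t ≤ phi s := by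
  unfold phi
  rw [Real.sign_of_pos hs, Real.sign_of_pos (hs.trans_le hst)]
  apply one_div_le_one_div_of_le (sq_pos' hs.ne')
  exact pow_le_pow_left₀ hs.le hst 2

lemma phi_lt_pos {s t : ℝ} (hs : 0 < s) (hst : s < t) : phi t < phi s := by
  unfold phi
  rw [Real.sign_of_pos hs, Real.sign_of_pos (hs.trans hst)]
  apply one_div_lt_one_div_of_lt (sq_pos' hs.ne')
  exact pow_lt_pow_left₀ hst hs.le (by norm_num)

lemma phi_le_neg {s t : ℝ} (ht : t < 0) (hst : s ≤ t) : phi t ≤ phi s := by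
  have hs : s < 0 := hst.trans_lt ht
  unfold phi
  rw [Real.sign_of_neg ht, Real.sign_of_neg hs]
  rw [div_le_div_iff₀ (sq_pos' ht.ne) (sq_pos' hs.ne)]
  nlinarith

lemma phi_lt_neg {s t : ℝ} (ht : t < 0) (hst : s < t) : phi t < phi s := by
  have hs : s < 0 := hst.trans ht
  unfold phi
  rw [Real.sign_of_neg ht, Real.sign_of_neg hs]
  rw [div_lt_div_iff₀ (sq_pos' ht.ne) (sq_pos' hs.ne)]
  nlinarith


variable {c n : ℕ} (ν : Fin c → ℕ)

lemma sum_Iic_eq (k : Fin c) :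
    ∑ j ∈ Finset.Iic k, ν j = (∑ j ∈ Finset.Iio k, ν j) + ν k := by
  rw [← Finset.Iio_insert, Finset.sum_insert (by simp), add_comm]

lemma exists_K (hc : 1 ≤ c) (hν : ∑ k, ν k = n) (m : ℕ) (hm : m < n) :
    ∃ k : Fin c, (∑ j ∈ Finset.Iio k, ν j) ≤ m ∧ m < (∑ j ∈ Finset.Iio k, ν j) + ν k := by
  set P := Finset.univ.filter fun k : Fin c => m < (∑ j ∈ Finset.Iio k, ν j) + ν k with hP
  have htop : (⟨c - 1, by omega⟩ : Fin c) ∈ P := by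
    have huniv : Finset.Iic (⟨c - 1, by omega⟩ : Fin c) = Finset.univ := by
      apply Finset.eq_univ_iff_forall.mpr
      intro j
      simp only [Finset.mem_Iic]
      rw [Fin.le_def]
      simp only [Fin.val_mk]
      omega
    simp only [hP, Finset.mem_filter, Finset.mem_univ, true_and]
    rw [← sum_Iic_eq, huniv, hν]; exact hm
  have hne : P.Nonempty := ⟨_, htop⟩
  refine ⟨P.min' hne, ?_, ?_⟩
  · by_contra h
    push_neg at h
    have hpos : 0 < ∑ j ∈ Finset.Iio (P.min' hne), ν j := by omega
    have hioNe : (Finset.Iio (P.min' hne)).Nonempty := by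
      by_contra he
      rw [Finset.not_nonempty_iff_eq_empty] at he
      rw [he] at hpos; simp at hpos
    set k' := (Finset.Iio (P.min' hne)).max' hioNe with hk'
    have hk'lt : k' < P.min' hne := Finset.mem_Iio.mp ((Finset.Iio (P.min' hne)).max'_mem hioNe)
    have hIic : Finset.Iic k' = Finset.Iio (P.min' hne) := by
      apply Finset.ext; intro j
      simp only [Finset.mem_Iic, Finset.mem_Iio]
      constructor
      · intro hj; exact lt_of_le_of_lt hj hk'lt
      · intro hj; exact Finset.le_max' _ _ (Finset.mem_Iio.mpr hj)
    have : k' ∈ P := by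
      simp only [hP, Finset.mem_filter, Finset.mem_univ, true_and]
      rw [← sum_Iic_eq, hIic]; exact h
    exact absurd (Finset.min'_le _ _ this) (not_le.mpr hk'lt)
  · have := P.min'_mem hne
    simp only [hP, Finset.mem_filter] at this
    exact this.2

lemma K_unique {k1 k2 : Fin c} {m : ℕ}
    (h1 : (∑ j ∈ Finset.Iio k1, ν j) ≤ m ∧ m < (∑ j ∈ Finset.Iio k1, ν j) + ν k1)
    (h2 : (∑ j ∈ Finset.Iio k2, ν j) ≤ m ∧ m < (∑ j ∈ Finset.Iio k2, ν j) + ν k2) :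
    k1 = k2 := by
  by_contra hne
  rcases lt_or_gt_of_ne hne with h | h
  · have hsub : Finset.Iic k1 ⊆ Finset.Iio k2 := fun j hj =>
      Finset.mem_Iio.mpr (lt_of_le_of_lt (Finset.mem_Iic.mp hj) h)
    have := Finset.sum_le_sum_of_subset (f := ν) hsub
    rw [sum_Iic_eq] at this
    omega
  · have hsub : Finset.Iic k2 ⊆ Finset.Iio k1 := fun j hj =>
      Finset.mem_Iio.mpr (lt_of_le_of_lt (Finset.mem_Iic.mp hj) h)
    have := Finset.sum_le_sum_of_subset (f := ν) hsub
    rw [sum_Iic_eq] at this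
    omega

lemma K_mono {k1 k2 : Fin c} {m1 m2 : ℕ} (hm : m1 ≤ m2)
    (h1 : (∑ j ∈ Finset.Iio k1, ν j) ≤ m1 ∧ m1 < (∑ j ∈ Finset.Iio k1, ν j) + ν k1)
    (h2 : (∑ j ∈ Finset.Iio k2, ν j) ≤ m2 ∧ m2 < (∑ j ∈ Finset.Iio k2, ν j) + ν k2) :
    k1 ≤ k2 := by
  by_contra h
  push_neg at h
  have hsub : Finset.Iic k2 ⊆ Finset.Iio k1 := fun j hj =>
    Finset.mem_Iio.mpr (lt_of_le_of_lt (Finset.mem_Iic.mp hj) h)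
  have := Finset.sum_le_sum_of_subset (f := ν) hsub
  rw [sum_Iic_eq] at this
  omega


section
variable {n c : ℕ} {q u : Fin (c + 1) → ℝ}

lemma force_update (x : Fin n → ℝ) (m : Fin n) (a : ℝ) :
    force n c q u (Function.update x m a) m =
      (∑ j ∈ Finset.univ \ {m}, phi (a - x j)) + ∑ j, u j * phi (a - q j) := by
  unfold force phi
  rw [Function.update_self]
  congr 1
  · apply Finset.sum_congr rfl
    intro j hj
    have hjm : j ≠ m := by simpa using (Finset.mem_sdiff.mp hj).2
    rw [Function.update_of_ne hjm]
  · exact Finset.sum_congr rfl fun j _ => mul_div_assoc _ _ _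

lemma kPrime_eq (hq : StrictMono q) {x : Fin n → ℝ} {m : Fin n} {K : Fin c}
    (h1 : q K.castSucc < x m) (h2 : x m < q K.succ) :
    kPrime n c q x m = K.succ := by
  unfold kPrime
  have hmem : K.succ ∈ Finset.univ.filter fun j : Fin (c+1) => x m < q j := by
    simp [h2]
  rw [dif_pos ⟨_, hmem⟩]
  apply le_antisymm (Finset.min'_le _ _ hmem)
  by_contra h
  push_neg at h
  set w := (Finset.univ.filter fun j : Fin (c+1) => x m < q j).min' ⟨_, hmem⟩ with hw
  have hmin := Finset.min'_mem (Finset.univ.filter fun j : Fin (c+1) => x m < q j) ⟨_, hmem⟩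
  simp only [Finset.mem_filter, Finset.mem_univ, true_and] at hmin
  have hle : w ≤ K.castSucc := by
    rw [Fin.lt_def] at h
    rw [Fin.le_def]
    simp only [Fin.val_succ, Fin.coe_castSucc] at h ⊢
    omega
  have := hq.monotone hle
  rw [← hw] at hmin
  linarith

lemma state_mono {x : Fin n → ℝ} (hx : x ∈ stateSpace n c q) {i j : Fin n} (h : i ≤ j) :
    x i ≤ x j := by
  rcases eq_or_lt_of_le h with rfl | h
  · exact le_refl _
  · exact (hx.1 i j h).le

lemma roa_bounds (hq : StrictMono q) {ν : Fin c → ℕ} {x : Fin n → ℝ}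
    (hx : x ∈ roa n c q ν) (m : Fin n) (K : Fin c)
    (hK1 : (∑ j ∈ Finset.Iio K, ν j) ≤ (m : ℕ))
    (hK2 : (m : ℕ) < (∑ j ∈ Finset.Iio K, ν j) + ν K)
    {a : ℝ} (ha : a ∈ Set.Ioo (xLow n c q x m) (xUp n c q x m)) :
    (∀ j : Fin n, j < m → x j < a) ∧ (∀ j : Fin n, m < j → a < x j) ∧
      q K.castSucc < a ∧ a < q K.succ := by
  obtain ⟨hxm1, hxm2⟩ := hx.2 K m hK1 hK2
  have hkp : kPrime n c q x m = K.succ := kPrime_eq hq hxm1 hxm2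
  have hkv : (kPrime n c q x m : ℕ) = (K : ℕ) + 1 := by rw [hkp]; rfl
  have hidx : (⟨((kPrime n c q x m : ℕ)) - 1,
      lt_of_le_of_lt (Nat.sub_le _ _) (kPrime n c q x m).isLt⟩ : Fin (c+1)) = K.castSucc := by
    apply Fin.ext
    simp [hkv]
  have hlow : max (xPrev n c q x m) (q K.castSucc) < a := by
    have := ha.1; unfold xLow at this; rw [hidx] at this; exact this
  have hup : a < min (xNext n c q x m) (q K.succ) := by
    have := ha.2; unfold xUp at this; rw [hkp] at this; exact this
  refine ⟨?_, ?_, (max_lt_iff.mp hlow).2, (lt_min_iff.mp hup).2⟩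
  · intro j hj
    have hm0 : 0 < (m : ℕ) := by
      have := Fin.lt_def.mp hj; omega
    have hprev : xPrev n c q x m = x ⟨(m : ℕ) - 1, lt_of_le_of_lt (Nat.sub_le _ _) m.isLt⟩ := by
      unfold xPrev; rw [dif_pos hm0]
    have hj' : j ≤ (⟨(m : ℕ) - 1, lt_of_le_of_lt (Nat.sub_le _ _) m.isLt⟩ : Fin n) := by
      rw [Fin.le_def]; have := Fin.lt_def.mp hj; simp; omega
    calc x j ≤ xPrev n c q x m := by rw [hprev]; exact state_mono hx.1 hj'
    _ < a := lt_of_le_of_lt (le_max_left _ _) hlow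
  · intro j hj
    have hm1 : (m : ℕ) + 1 < n := by
      have := Fin.lt_def.mp hj; have := j.isLt; omega
    have hnext : xNext n c q x m = x ⟨(m : ℕ) + 1, hm1⟩ := by
      unfold xNext; rw [dif_pos hm1]
    have hj' : (⟨(m : ℕ) + 1, hm1⟩ : Fin n) ≤ j := by
      rw [Fin.le_def]; have := Fin.lt_def.mp hj; simp; omega
    calc a < xNext n c q x m := lt_of_lt_of_le hup (min_le_left _ _)
    _ ≤ x j := by rw [hnext]; exact state_mono hx.1 hj'
end

section
open Finset
variable {n c : ℕ} {q u : Fin (c + 1) → ℝ}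

lemma electrode_cases (m : Fin (c+1)) (K : Fin c) : m ≤ K.castSucc ∨ K.succ ≤ m := by
  rw [Fin.le_def, Fin.le_def]
  simp only [Fin.coe_castSucc, Fin.val_succ]
  omega

lemma contract_aux (hq : StrictMono q) (hu : ∀ j, 0 < u j)
    {x y : Fin n → ℝ} {m : Fin n} {K : Fin c} {a b d : ℝ}
    (hd : 0 < d) (hxy : ∀ j, x j - y j ≤ d) (hab : b + d ≤ a)
    (hxa : ∀ j : Fin n, j < m → x j < a) (hax : ∀ j : Fin n, m < j → a < x j)
    (hyb : ∀ j : Fin n, j < m → y j < b) (hby : ∀ j : Fin n, m < j → b < y j)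
    (haK1 : q K.castSucc < a) (haK2 : a < q K.succ)
    (hbK1 : q K.castSucc < b) (hbK2 : b < q K.succ) :
    ((∑ j ∈ Finset.univ \ {m}, phi (a - x j)) + ∑ j, u j * phi (a - q j)) <
      (∑ j ∈ Finset.univ \ {m}, phi (b - y j)) + ∑ j, u j * phi (b - q j) := by
  apply add_lt_add_of_le_of_lt
  · apply Finset.sum_le_sum
    intro j hj
    have hjm : j ≠ m := by simpa using (Finset.mem_sdiff.mp hj).2
    have hd' : b - y j ≤ a - x j := by have := hxy j; linarith
    rcases lt_or_gt_of_ne hjm with h | h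
    · exact phi_le_pos (by linarith [hyb j h]) hd'
    · exact phi_le_neg (by linarith [hax j h]) hd'
  · apply Finset.sum_lt_sum_of_nonempty Finset.univ_nonempty
    intro j _
    apply mul_lt_mul_of_pos_left _ (hu j)
    have hba : b - q j < a - q j := by linarith
    rcases electrode_cases j K with h | h
    · exact phi_lt_pos (by linarith [hq.monotone h]) hba
    · exact phi_lt_neg (by linarith [hq.monotone h]) hba

lemma mono_aux (hq : StrictMono q) (hu : ∀ j, 0 < u j)
    {x : Fin n → ℝ} {m m' : Fin n} {K : Fin c} {a b : ℝ}
    (hmm : (m' : ℕ) = (m : ℕ) + 1) (hba : b ≤ a)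
    (hxa : ∀ j : Fin n, j < m → x j < a) (hax : ∀ j : Fin n, m < j → a < x j)
    (hxb : ∀ j : Fin n, j < m' → x j < b) (hbx : ∀ j : Fin n, m' < j → b < x j)
    (haK1 : q K.castSucc < a) (haK2 : a < q K.succ)
    (hbK1 : q K.castSucc < b) (hbK2 : b < q K.succ) :
    ((∑ j ∈ Finset.univ \ {m}, phi (a - x j)) + ∑ j, u j * phi (a - q j)) <
      (∑ j ∈ Finset.univ \ {m'}, phi (b - x j)) + ∑ j, u j * phi (b - q j) := by
  have hmne : m ≠ m' := by intro h; rw [h] at hmm; omega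
  have hmm' : m < m' := by rw [Fin.lt_def]; omega
  have hreidx : ∑ j ∈ Finset.univ \ {m'}, phi (b - x j)
      = ∑ j ∈ Finset.univ \ {m}, phi (b - x (Equiv.swap m m' j)) := by
    apply Finset.sum_equiv (Equiv.swap m m').symm
    · intro i
      simp only [Finset.mem_sdiff, Finset.mem_univ, true_and, Finset.mem_singleton]
      rw [not_iff_not]
      constructor
      · intro h; rw [h]; simp
      · intro h
        have := congrArg (Equiv.swap m m') h
        simpa using this
    · intro i _
      simp
  rw [hreidx]
  apply add_lt_add_of_lt_of_le
  · apply Finset.sum_lt_sum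
    · intro j hj
      have hjm : j ≠ m := by simpa using (Finset.mem_sdiff.mp hj).2
      by_cases hjm' : j = m'
      · rw [hjm', Equiv.swap_apply_right]
        have h1 : phi (a - x m') < 0 := phi_neg (by linarith [hax m' hmm'])
        have h2 : 0 < phi (b - x m) := phi_pos (by linarith [hxb m hmm'])
        linarith
      · rw [Equiv.swap_apply_of_ne_of_ne hjm hjm']
        have hd' : b - x j ≤ a - x j := by linarith
        rcases lt_or_gt_of_ne hjm with h | h
        · have hjm'2 : j < m' := lt_trans h hmm'
          exact phi_le_pos (by linarith [hxb j hjm'2]) hd'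
        · exact phi_le_neg (by linarith [hax j h]) hd'
    · refine ⟨m', ?_, ?_⟩
      · simp [Ne.symm hmne]
      · rw [Equiv.swap_apply_right]
        have h1 : phi (a - x m') < 0 := phi_neg (by linarith [hax m' hmm'])
        have h2 : 0 < phi (b - x m) := phi_pos (by linarith [hxb m hmm'])
        linarith
  · apply Finset.sum_le_sum
    intro j _
    apply mul_le_mul_of_nonneg_left _ (hu j).le
    have hba' : b - q j ≤ a - q j := by linarith
    rcases electrode_cases j K with h | h
    · exact phi_le_pos (by linarith [hq.monotone h]) hba'
    · exact phi_le_neg (by linarith [hq.monotone h]) hba'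
end

end Aux

/-- The map `g` defined componentwise by `g_k(x) =` the unique zero of
`y ↦ f_k(…,y,…,u)` in `(x_k^L, x_k^U)` maps `𝒮(ν)` into itself and is a contraction in the
maximum norm: `‖g(x) − g(y)‖_∞ < ‖x − y‖_∞` for `x ≠ y`; in particular it has at most one
fixed point in `𝒮(ν)`. (The norm on `Fin n → ℝ` is the sup norm.) -/
theorem stmt11 (n c : ℕ) (hn : 1 ≤ n) (hc : 1 ≤ c)
    (q : Fin (c + 1) → ℝ) (hq : StrictMono q)
    (u : Fin (c + 1) → ℝ) (hu : ∀ j, 0 < u j)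
    (ν : Fin c → ℕ) (hν : ∑ k, ν k = n)
    (g : (Fin n → ℝ) → Fin n → ℝ)
    (hg : ∀ x ∈ roa n c q ν, ∀ k : Fin n,
      g x k ∈ Set.Ioo (xLow n c q x k) (xUp n c q x k) ∧
      force n c q u (Function.update x k (g x k)) k = 0) :
    (∀ x ∈ roa n c q ν, g x ∈ roa n c q ν) ∧
    (∀ x ∈ roa n c q ν, ∀ y ∈ roa n c q ν, x ≠ y → ‖g x - g y‖ < ‖x - y‖) ∧
    (∀ x ∈ roa n c q ν, ∀ y ∈ roa n c q ν, g x = x → g y = y → x = y) := by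
  choose K hK1 hK2 using fun m : Fin n => exists_K ν hc hν (m : ℕ) m.isLt
  have part1 : ∀ x ∈ roa n c q ν, g x ∈ roa n c q ν := by
    intro x hx
    have B : ∀ m : Fin n, (∀ j : Fin n, j < m → x j < g x m) ∧
        (∀ j : Fin n, m < j → g x m < x j) ∧
        q (K m).castSucc < g x m ∧ g x m < q (K m).succ :=
      fun m => roa_bounds hq hx m (K m) (hK1 m) (hK2 m) (hg x hx m).1
    have claim : ∀ (m : Fin n) (h : (m : ℕ) + 1 < n), g x m < g x ⟨(m : ℕ) + 1, h⟩ := by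
      intro m h
      set m' : Fin n := ⟨(m : ℕ) + 1, h⟩ with hm'
      have hmv : (m' : ℕ) = (m : ℕ) + 1 := rfl
      have hKle : K m ≤ K m' :=
        K_mono ν (by omega) ⟨hK1 m, hK2 m⟩ ⟨hK1 m', hK2 m'⟩
      rcases eq_or_lt_of_le hKle with hKeq | hKlt
      · by_contra hcon
        push_neg at hcon
        have hza := (hg x hx m).2
        have hzb := (hg x hx m').2
        rw [force_update] at hza hzb
        have hlt := mono_aux (u := u) hq hu hmv hcon
          (B m).1 (B m).2.1 (B m').1 (B m').2.1 (B m).2.2.1 (B m).2.2.2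
          (hKeq ▸ (B m').2.2.1) (hKeq ▸ (B m').2.2.2)
        rw [hza, hzb] at hlt
        exact lt_irrefl _ hlt
      · have hle : (K m).succ ≤ (K m').castSucc := by
          rw [Fin.le_def]
          have := Fin.lt_def.mp hKlt
          simp only [Fin.val_succ, Fin.coe_castSucc]
          omega
        calc g x m < q (K m).succ := (B m).2.2.2
          _ ≤ q (K m').castSucc := hq.monotone hle
          _ < g x m' := (B m').2.2.1
    have mono : ∀ d : ℕ, ∀ i j : Fin n, (j : ℕ) = (i : ℕ) + d + 1 → g x i < g x j := by
      intro d
      induction d with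
      | zero =>
        intro i j hij
        have h : (i : ℕ) + 1 < n := by have := j.isLt; omega
        have hj : j = ⟨(i : ℕ) + 1, h⟩ := Fin.ext (by simp; omega)
        rw [hj]; exact claim i h
      | succ d ih =>
        intro i j hij
        have h : (i : ℕ) + 1 < n := by have := j.isLt; omega
        exact lt_trans (claim i h) (ih ⟨(i : ℕ) + 1, h⟩ j (by simp; omega))
    refine ⟨⟨?_, ?_⟩, ?_⟩
    · intro i j hij
      exact mono ((j : ℕ) - (i : ℕ) - 1) i j (by have := Fin.lt_def.mp hij; omega)
    · intro m
      exact ⟨lt_of_le_of_lt (hq.monotone (Fin.zero_le _)) (B m).2.2.1,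
        lt_of_lt_of_le (B m).2.2.2 (hq.monotone (Fin.le_last _))⟩
    · intro k m h1 h2
      have hk : k = K m := K_unique ν ⟨h1, h2⟩ ⟨hK1 m, hK2 m⟩
      rw [hk]
      exact ⟨(B m).2.2.1, (B m).2.2.2⟩
  have part2 : ∀ x ∈ roa n c q ν, ∀ y ∈ roa n c q ν, x ≠ y → ‖g x - g y‖ < ‖x - y‖ := by
    intro x hx y hy hxy
    have hd : 0 < ‖x - y‖ := norm_pos_iff.mpr (sub_ne_zero.mpr hxy)
    set d := ‖x - y‖ with hdd
    have key : ∀ x' ∈ roa n c q ν, ∀ y' ∈ roa n c q ν,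
        (∀ j, x' j - y' j ≤ d) → ∀ m : Fin n, g x' m - g y' m < d := by
      intro x' hx' y' hy' hj m
      by_contra hcon
      push_neg at hcon
      have Bx := roa_bounds hq hx' m (K m) (hK1 m) (hK2 m) (hg x' hx' m).1
      have By := roa_bounds hq hy' m (K m) (hK1 m) (hK2 m) (hg y' hy' m).1
      have hza := (hg x' hx' m).2
      have hzb := (hg y' hy' m).2
      rw [force_update] at hza hzb
      have hlt := contract_aux (u := u) hq hu hd hj (by linarith)
        Bx.1 Bx.2.1 By.1 By.2.1 Bx.2.2.1 Bx.2.2.2 By.2.2.1 By.2.2.2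
      rw [hza, hzb] at hlt
      exact lt_irrefl _ hlt
    rw [pi_norm_lt_iff hd]
    intro m
    have h1 : ∀ j, x j - y j ≤ d := by
      intro j
      have h := norm_le_pi_norm (x - y) j
      simp only [Pi.sub_apply, Real.norm_eq_abs] at h
      exact le_trans (le_abs_self _) h
    have h2 : ∀ j, y j - x j ≤ d := by
      intro j
      have h := norm_le_pi_norm (y - x) j
      rw [norm_sub_rev] at h
      simp only [Pi.sub_apply, Real.norm_eq_abs] at h
      exact le_trans (le_abs_self _) h
    simp only [Pi.sub_apply, Real.norm_eq_abs]
    rw [abs_sub_lt_iff]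
    exact ⟨key x hx y hy h1 m, key y hy x hx h2 m⟩
  refine ⟨part1, part2, ?_⟩
  intro x hx y hy hgx hgy
  by_contra hne
  have hlt := part2 x hx y hy hne
  rw [hgx, hgy] at hlt
  exact lt_irrefl _ hlt
end
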